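/- arXiv:2207.07352 — 7 statements merged into one kernel-verified Lean document; each statement's English description precedes it below -/
import Mathlib

section
/- Let z_F > 0, let D : ℝ → ℝ be continuous on [0,z_F] with D(z) > 0 for all z ∈ [0,z_F) and with 1/D integrable on (0,z_F), and set I(D) = (∫₀^{z_F} 1/D(z) dz)^{1/2}. Then for every continuously differentiable function v : ℝ → ℝ on [0,z_F] and every z ∈ [0,z_F], one has |v(z)| ≤ (1/√z_F + 2·I(D)) · ‖v‖_α, where ‖v‖_α = (∫₀^{z_F} D(z)·v'(z)² dz + ∫₀^{z_F} v(z)² dz)^{1/2}. -/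
open MeasureTheory

/-- `I(D) = (∫₀^{z_F} 1/D)^{1/2}`. -/
noncomputable def IofD (zF : ℝ) (D : ℝ → ℝ) : ℝ :=
  Real.sqrt (∫ t in (0:ℝ)..zF, 1 / D t)

/-- The weighted norm `‖v‖_α = (∫₀^{z_F} D v'² + ∫₀^{z_F} v²)^{1/2}`. -/
noncomputable def normAlpha (zF : ℝ) (D v v' : ℝ → ℝ) : ℝ :=
  Real.sqrt ((∫ t in (0:ℝ)..zF, D t * (v' t) ^ 2) + ∫ t in (0:ℝ)..zF, (v t) ^ 2)

/-- Cauchy–Schwarz for real integrals. -/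
lemma cs_aux {α : Type*} [MeasurableSpace α] {μ : Measure α} {f g : α → ℝ}
    (hf : MemLp f 2 μ) (hg : MemLp g 2 μ) :
    ∫ a, |f a * g a| ∂μ ≤
      Real.sqrt (∫ a, (f a) ^ 2 ∂μ) * Real.sqrt (∫ a, (g a) ^ 2 ∂μ) := by
  have h2 : Real.HolderConjugate 2 2 := by constructor <;> norm_num
  have hf2 : MemLp f (ENNReal.ofReal 2) μ := by
    simpa [ENNReal.ofReal_ofNat] using hf
  have hg2 : MemLp g (ENNReal.ofReal 2) μ := by
    simpa [ENNReal.ofReal_ofNat] using hg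
  have H := integral_mul_norm_le_Lp_mul_Lq h2 hf2 hg2
  have hL : ∫ a, |f a * g a| ∂μ = ∫ a, ‖f a‖ * ‖g a‖ ∂μ := by
    simp [abs_mul, Real.norm_eq_abs]
  have hpow : ∀ x : ℝ, ‖x‖ ^ (2:ℝ) = x ^ 2 := by
    intro x
    rw [show ((2:ℝ)) = ((2:ℕ):ℝ) by norm_num, Real.rpow_natCast]
    simp [Real.norm_eq_abs, sq_abs]
  have hRf : (∫ a, ‖f a‖ ^ (2:ℝ) ∂μ) = ∫ a, (f a) ^ 2 ∂μ := by
    simp [hpow]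
  have hRg : (∫ a, ‖g a‖ ^ (2:ℝ) ∂μ) = ∫ a, (g a) ^ 2 ∂μ := by
    simp [hpow]
  rw [hL]
  calc ∫ a, ‖f a‖ * ‖g a‖ ∂μ
      ≤ (∫ a, ‖f a‖ ^ (2:ℝ) ∂μ) ^ (1/(2:ℝ)) * (∫ a, ‖g a‖ ^ (2:ℝ) ∂μ) ^ (1/(2:ℝ)) := H
    _ = Real.sqrt (∫ a, (f a) ^ 2 ∂μ) * Real.sqrt (∫ a, (g a) ^ 2 ∂μ) := by
        rw [hRf, hRg, Real.sqrt_eq_rpow, Real.sqrt_eq_rpow]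

theorem stmt_0 (zF : ℝ) (hzF : 0 < zF) (D : ℝ → ℝ)
    (hDcont : ContinuousOn D (Set.Icc 0 zF))
    (hDpos : ∀ z ∈ Set.Ico 0 zF, 0 < D z)
    (hDint : IntervalIntegrable (fun z => 1 / D z) volume 0 zF)
    (v v' : ℝ → ℝ)
    (hv : ∀ z ∈ Set.Icc 0 zF, HasDerivAt v (v' z) z)
    (hv' : ContinuousOn v' (Set.Icc 0 zF))
    (z : ℝ) (hz : z ∈ Set.Icc 0 zF) :
    |v z| ≤ (1 / Real.sqrt zF + 2 * IofD zF D) * normAlpha zF D v v' := by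
  have hzF0 : (0:ℝ) ≤ zF := hzF.le
  have hIoc : Set.Ioc (0:ℝ) zF ⊆ Set.Icc 0 zF := Set.Ioc_subset_Icc_self
  set μr : Measure ℝ := volume.restrict (Set.Ioc (0:ℝ) zF) with hμr
  -- D is nonnegative on the closed interval
  have hDzF : 0 ≤ D zF := by
    have hmem : zF ∈ closure (Set.Ico (0:ℝ) zF) := by
      rw [closure_Ico hzF.ne]; exact Set.right_mem_Icc.2 hzF0
    have hNB : (nhdsWithin zF (Set.Ico (0:ℝ) zF)).NeBot :=
      mem_closure_iff_nhdsWithin_neBot.1 hmem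
    have htend : Filter.Tendsto D (nhdsWithin zF (Set.Ico (0:ℝ) zF)) (nhds (D zF)) :=
      (hDcont zF (Set.right_mem_Icc.2 hzF0)).mono_left
        (nhdsWithin_mono _ Set.Ico_subset_Icc_self)
    exact ge_of_tendsto htend
      (Filter.eventually_of_mem self_mem_nhdsWithin fun y hy => (hDpos y hy).le)
  have hDnn : ∀ x ∈ Set.Icc (0:ℝ) zF, 0 ≤ D x := by
    intro x hx
    rcases eq_or_lt_of_le hx.2 with h | h
    · rw [h]; exact hDzF
    · exact (hDpos x ⟨hx.1, h⟩).le
  -- continuity of v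
  have hvcont : ContinuousOn v (Set.Icc 0 zF) :=
    fun x hx => (hv x hx).continuousAt.continuousWithinAt
  -- integrability facts
  have hv'int : IntegrableOn v' (Set.Ioc 0 zF) volume :=
    (hv'.integrableOn_Icc).mono_set Set.Ioc_subset_Icc_self
  have hvint : IntegrableOn v (Set.Ioc 0 zF) volume :=
    (hvcont.integrableOn_Icc).mono_set Set.Ioc_subset_Icc_self
  have hv'absint : Integrable (fun x => |v' x|) μr := hv'int.abs
  have hvabsint : Integrable (fun x => |v x|) μr := hvint.abs
  -- `A = ∫₀^{z_F} |v'|`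
  set A : ℝ := ∫ x, |v' x| ∂μr with hA
  have hAnn : 0 ≤ A := integral_nonneg fun x => abs_nonneg _
  -- almost everywhere membership / non-endpoint
  have hmemae : ∀ᵐ x ∂μr, x ∈ Set.Ioc (0:ℝ) zF := ae_restrict_mem measurableSet_Ioc
  have hneae : ∀ᵐ x ∂μr, x ≠ zF := by
    refine ae_restrict_of_ae ?_
    have h0 : volume ({zF} : Set ℝ) = 0 := measure_singleton _
    rw [MeasureTheory.ae_iff]
    convert h0 using 2
    ext x; simp
  -- MemLp facts
  have hDmeas : AEMeasurable D μr :=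
    (hDcont.mono hIoc).aemeasurable measurableSet_Ioc
  have hf1meas : AEStronglyMeasurable (fun x => (Real.sqrt (D x))⁻¹) μr :=
    ((Real.continuous_sqrt.measurable.comp_aemeasurable hDmeas).inv).aestronglyMeasurable
  have hDintIoc : IntegrableOn (fun z => 1 / D z) (Set.Ioc 0 zF) volume :=
    (intervalIntegrable_iff_integrableOn_Ioc_of_le hzF0).mp hDint
  have hsqf1 : (fun x => 1 / D x) =ᵐ[μr] fun x => ((Real.sqrt (D x))⁻¹) ^ 2 := by
    filter_upwards [hmemae] with x hx
    have hd : 0 ≤ D x := hDnn x (hIoc hx)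
    rw [inv_pow, Real.sq_sqrt hd, one_div]
  have hf1 : MemLp (fun x => (Real.sqrt (D x))⁻¹) 2 μr := by
    rw [memLp_two_iff_integrable_sq hf1meas]
    exact (hDintIoc : Integrable _ μr).congr hsqf1
  have hg1cont : ContinuousOn (fun x => Real.sqrt (D x) * v' x) (Set.Icc 0 zF) :=
    (Real.continuous_sqrt.comp_continuousOn hDcont).mul hv'
  have hg1meas : AEStronglyMeasurable (fun x => Real.sqrt (D x) * v' x) μr :=
    (hg1cont.mono hIoc).aestronglyMeasurable measurableSet_Ioc
  have hDv'cont : ContinuousOn (fun x => D x * (v' x) ^ 2) (Set.Icc 0 zF) :=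
    hDcont.mul (hv'.pow 2)
  have hDv'int : IntegrableOn (fun x => D x * (v' x) ^ 2) (Set.Ioc 0 zF) volume :=
    (hDv'cont.integrableOn_Icc).mono_set Set.Ioc_subset_Icc_self
  have hsqg1 : (fun x => D x * (v' x) ^ 2) =ᵐ[μr]
      fun x => (Real.sqrt (D x) * v' x) ^ 2 := by
    filter_upwards [hmemae] with x hx
    have hd : 0 ≤ D x := hDnn x (hIoc hx)
    rw [mul_pow, Real.sq_sqrt hd]
  have hg1 : MemLp (fun x => Real.sqrt (D x) * v' x) 2 μr := by
    rw [memLp_two_iff_integrable_sq hg1meas]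
    exact (hDv'int : Integrable _ μr).congr hsqg1
  have hvsqint : IntegrableOn (fun x => (v x) ^ 2) (Set.Ioc 0 zF) volume :=
    ((hvcont.pow 2).integrableOn_Icc).mono_set Set.Ioc_subset_Icc_self
  have hvmemℒp : MemLp v 2 μr := by
    rw [memLp_two_iff_integrable_sq
      ((hvcont.mono hIoc).aestronglyMeasurable measurableSet_Ioc)]
    exact hvsqint
  have h1memℒp : MemLp (fun _ : ℝ => (1:ℝ)) 2 μr := memLp_const 1
  -- abbreviations for the three integrals
  have hμIoc : μr Set.univ = ENNReal.ofReal zF := by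
    rw [hμr, Measure.restrict_apply_univ, Real.volume_Ioc, sub_zero]
  set S1 : ℝ := ∫ t in (0:ℝ)..zF, D t * (v' t) ^ 2 with hS1
  set S2 : ℝ := ∫ t in (0:ℝ)..zF, (v t) ^ 2 with hS2
  have hS1r : S1 = ∫ x, D x * (v' x) ^ 2 ∂μr := intervalIntegral.integral_of_le hzF0
  have hS2r : S2 = ∫ x, (v x) ^ 2 ∂μr := intervalIntegral.integral_of_le hzF0
  have hS1nn : 0 ≤ S1 := by
    rw [hS1r]
    exact integral_nonneg_of_ae <| by
      filter_upwards [hmemae] with x hx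
      exact mul_nonneg (hDnn x (hIoc hx)) (sq_nonneg _)
  have hS2nn : 0 ≤ S2 := by
    rw [hS2r]; exact integral_nonneg fun x => sq_nonneg _
  set N : ℝ := normAlpha zF D v v' with hN
  have hNnn : 0 ≤ N := Real.sqrt_nonneg _
  have hS1N : Real.sqrt S1 ≤ N := Real.sqrt_le_sqrt (le_add_of_nonneg_right hS2nn)
  have hS2N : Real.sqrt S2 ≤ N := Real.sqrt_le_sqrt (le_add_of_nonneg_left hS1nn)
  have hInn : 0 ≤ IofD zF D := Real.sqrt_nonneg _
  -- First Cauchy–Schwarz: A ≤ I(D) * √S1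
  have hCS1 : A ≤ IofD zF D * Real.sqrt S1 := by
    have heq : (fun x => |v' x|) =ᵐ[μr]
        fun x => |(Real.sqrt (D x))⁻¹ * (Real.sqrt (D x) * v' x)| := by
      filter_upwards [hmemae, hneae] with x hx hxne
      have hd : 0 < D x := hDpos x ⟨hx.1.le, lt_of_le_of_ne hx.2 hxne⟩
      have hsd : Real.sqrt (D x) ≠ 0 := by positivity
      rw [← mul_assoc, inv_mul_cancel₀ hsd, one_mul]
    have h := cs_aux hf1 hg1
    have hAle : A ≤ Real.sqrt (∫ x, ((Real.sqrt (D x))⁻¹) ^ 2 ∂μr) *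
        Real.sqrt (∫ x, (Real.sqrt (D x) * v' x) ^ 2 ∂μr) := by
      rw [hA, integral_congr_ae heq]; exact h
    have hI : Real.sqrt (∫ x, ((Real.sqrt (D x))⁻¹) ^ 2 ∂μr) = IofD zF D := by
      rw [← integral_congr_ae hsqf1, IofD, intervalIntegral.integral_of_le hzF0]
    have hG : Real.sqrt (∫ x, (Real.sqrt (D x) * v' x) ^ 2 ∂μr) = Real.sqrt S1 := by
      rw [← integral_congr_ae hsqg1, hS1r]
    rwa [hI, hG] at hAle
  -- Second Cauchy–Schwarz: ∫|v| ≤ √zF * √S2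
  have hCS2 : (∫ x, |v x| ∂μr) ≤ Real.sqrt zF * Real.sqrt S2 := by
    have h := cs_aux h1memℒp hvmemℒp
    have h1 : (∫ x, ((1:ℝ)) ^ 2 ∂μr) = zF := by
      simp [Measure.real, hμIoc, ENNReal.toReal_ofReal hzF0]
    calc (∫ x, |v x| ∂μr) = ∫ x, |(1:ℝ) * v x| ∂μr := by simp
      _ ≤ Real.sqrt (∫ x, ((1:ℝ)) ^ 2 ∂μr) * Real.sqrt (∫ x, (v x) ^ 2 ∂μr) := h
      _ = Real.sqrt zF * Real.sqrt S2 := by rw [h1, hS2r]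
  -- Pointwise bound: |v z| ≤ |v y| + A for y in the interval
  have hpoint : ∀ y ∈ Set.Ioc (0:ℝ) zF, |v z| ≤ |v y| + A := by
    intro y hy
    have hyIcc : y ∈ Set.Icc (0:ℝ) zF := hIoc hy
    have huIcc : Set.uIcc y z ⊆ Set.Icc (0:ℝ) zF := Set.uIcc_subset_Icc hyIcc hz
    have hFTC : ∫ t in y..z, v' t = v z - v y :=
      intervalIntegral.integral_eq_sub_of_hasDerivAt
        (fun x hx => hv x (huIcc hx))
        ((hv'.mono huIcc).intervalIntegrable)
    have hsub : Set.uIoc y z ⊆ Set.Ioc (0:ℝ) zF := by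
      rw [Set.uIoc]
      exact Set.Ioc_subset_Ioc (le_min hyIcc.1 hz.1) (max_le hyIcc.2 hz.2)
    have hb1 : |∫ t in y..z, v' t| ≤ ∫ t in Set.uIoc y z, |v' t| := by
      simpa [Real.norm_eq_abs] using
        intervalIntegral.norm_integral_le_integral_norm_uIoc
          (f := v') (a := y) (b := z) (μ := volume)
    have hb2 : (∫ t in Set.uIoc y z, |v' t|) ≤ A := by
      refine setIntegral_mono_set hv'absint ?_ hsub.eventuallyLE
      filter_upwards with x using abs_nonneg _
    have : |v z - v y| ≤ A := by rw [← hFTC]; exact hb1.trans hb2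
    calc |v z| = |v y + (v z - v y)| := by ring_nf
      _ ≤ |v y| + |v z - v y| := abs_add_le _ _
      _ ≤ |v y| + A := by linarith
  -- Integrate the pointwise bound over y
  have hkey : zF * |v z| ≤ Real.sqrt zF * Real.sqrt S2 + zF * A := by
    have hint : (∫ _ : ℝ, |v z| ∂μr) ≤ ∫ y, (|v y| + A) ∂μr := by
      refine setIntegral_mono_on (integrable_const _)
        (hvabsint.add (integrable_const _)) measurableSet_Ioc ?_
      intro y hy; exact hpoint y hy
    have hL : (∫ _ : ℝ, |v z| ∂μr) = zF * |v z| := by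
      rw [integral_const, Measure.real, hμIoc, ENNReal.toReal_ofReal hzF0, smul_eq_mul]
    have hR : (∫ y, (|v y| + A) ∂μr) = (∫ y, |v y| ∂μr) + zF * A := by
      rw [integral_add hvabsint (integrable_const _), integral_const, Measure.real, hμIoc,
        ENNReal.toReal_ofReal hzF0, smul_eq_mul]
    rw [hL, hR] at hint
    have := add_le_add hCS2 (le_refl (zF * A))
    linarith
  -- Conclude
  have hsq : Real.sqrt zF * Real.sqrt zF = zF := Real.mul_self_sqrt hzF0
  have hsqpos : 0 < Real.sqrt zF := Real.sqrt_pos.2 hzF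
  have hfin : zF * |v z| ≤ zF * ((1 / Real.sqrt zF + 2 * IofD zF D) * N) := by
    have h1 : Real.sqrt zF * Real.sqrt S2 ≤ Real.sqrt zF * N :=
      mul_le_mul_of_nonneg_left hS2N hsqpos.le
    have h2 : zF * A ≤ zF * (IofD zF D * Real.sqrt S1) :=
      mul_le_mul_of_nonneg_left hCS1 hzF0
    have h3 : IofD zF D * Real.sqrt S1 ≤ IofD zF D * N :=
      mul_le_mul_of_nonneg_left hS1N hInn
    have h4 : zF * (IofD zF D * Real.sqrt S1) ≤ zF * (IofD zF D * N) :=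
      mul_le_mul_of_nonneg_left h3 hzF0
    have hexp : zF * ((1 / Real.sqrt zF + 2 * IofD zF D) * N)
        = Real.sqrt zF * N + zF * (2 * (IofD zF D * N)) := by
      field_simp
      nlinarith [hsq]
    rw [hexp]
    nlinarith [mul_nonneg hInn hNnn, hzF0]
  exact le_of_mul_le_mul_left (by linarith) hzF
end

section
/- Let z_F > 0, let D : ℝ → ℝ be continuous on [0,z_F] with D(z) > 0 for all z ∈ [0,z_F) and with 1/D integrable on (0,z_F), and set I(D) = (∫₀^{z_F} 1/D(z) dz)^{1/2}. Then for every continuously differentiable function v : ℝ → ℝ on [0,z_F], the boundary value satisfies |v(0)| ≤ (1/√z_F + I(D)) · ‖v‖_α, where ‖v‖_α = (∫₀^{z_F} D(z)·v'(z)² dz + ∫₀^{z_F} v(z)² dz)^{1/2}. -/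
open MeasureTheory

lemma cs_integral {μ : Measure ℝ} {f g : ℝ → ℝ}
    (hf0 : 0 ≤ᵐ[μ] f) (hg0 : 0 ≤ᵐ[μ] g)
    (hfm : AEStronglyMeasurable f μ) (hgm : AEStronglyMeasurable g μ)
    (hf2 : Integrable (fun x => f x ^ 2) μ) (hg2 : Integrable (fun x => g x ^ 2) μ) :
    ∫ x, f x * g x ∂μ ≤ Real.sqrt (∫ x, f x ^ 2 ∂μ) * Real.sqrt (∫ x, g x ^ 2 ∂μ) := by
  have hpq : Real.HolderConjugate 2 2 := ⟨by norm_num, by norm_num, by norm_num⟩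
  have h2 : ENNReal.ofReal (2:ℝ) = 2 := by norm_num
  have hf : MemLp f (ENNReal.ofReal (2:ℝ)) μ := by
    rw [h2]; exact (memLp_two_iff_integrable_sq hfm).mpr hf2
  have hg : MemLp g (ENNReal.ofReal (2:ℝ)) μ := by
    rw [h2]; exact (memLp_two_iff_integrable_sq hgm).mpr hg2
  have key := integral_mul_le_Lp_mul_Lq_of_nonneg hpq hf0 hg0 hf hg
  have hrw : ∀ h : ℝ → ℝ, (∫ x, h x ^ (2:ℝ) ∂μ) = ∫ x, h x ^ 2 ∂μ := by
    intro h
    refine integral_congr_ae (Filter.Eventually.of_forall fun x => ?_)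
    simp only []
    rw [show (2:ℝ) = ((2:ℕ):ℝ) by norm_num, Real.rpow_natCast]
  rw [hrw, hrw] at key
  calc ∫ x, f x * g x ∂μ ≤ (∫ x, f x ^ 2 ∂μ) ^ (1/2 : ℝ) * (∫ x, g x ^ 2 ∂μ) ^ (1/2 : ℝ) := key
    _ = _ := by rw [← Real.sqrt_eq_rpow, ← Real.sqrt_eq_rpow]

theorem stmt_1 (zF : ℝ) (hzF : 0 < zF) (D : ℝ → ℝ)
    (hDcont : ContinuousOn D (Set.Icc 0 zF))
    (hDpos : ∀ z ∈ Set.Ico 0 zF, 0 < D z)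
    (hDint : IntervalIntegrable (fun z => 1 / D z) volume 0 zF)
    (v v' : ℝ → ℝ)
    (hv : ∀ z ∈ Set.Icc 0 zF, HasDerivAt v (v' z) z)
    (hv' : ContinuousOn v' (Set.Icc 0 zF)) :
    |v 0| ≤ (1 / Real.sqrt zF + IofD zF D) * normAlpha zF D v v' := by
  have hIooIcc : Set.Ioo (0:ℝ) zF ⊆ Set.Icc 0 zF := Set.Ioo_subset_Icc_self
  have huIcc : Set.uIcc (0:ℝ) zF = Set.Icc 0 zF := Set.uIcc_of_le hzF.le
  -- continuity of v
  have hvcont : ContinuousOn v (Set.Icc 0 zF) :=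
    fun z hz => (hv z hz).continuousAt.continuousWithinAt
  -- nonnegativity of D on Icc
  have hDzF : 0 ≤ D zF := by
    have h1 : ContinuousWithinAt D (Set.Ico 0 zF) zF :=
      (hDcont zF ⟨hzF.le, le_refl _⟩).mono Set.Ico_subset_Icc_self
    have h2 : zF ∈ closure (Set.Ico 0 zF) := by
      rw [closure_Ico hzF.ne]; exact ⟨hzF.le, le_refl _⟩
    haveI : (nhdsWithin zF (Set.Ico 0 zF)).NeBot := mem_closure_iff_nhdsWithin_neBot.mp h2
    exact ge_of_tendsto h1 (eventually_mem_nhdsWithin.mono fun x hx => (hDpos x hx).le)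
  have hDnn : ∀ z ∈ Set.Icc 0 zF, 0 ≤ D z := by
    intro z hz
    rcases lt_or_eq_of_le hz.2 with h | h
    · exact (hDpos z ⟨hz.1, h⟩).le
    · rw [h]; exact hDzF
  -- abbreviations
  set A := ∫ t in (0:ℝ)..zF, D t * (v' t) ^ 2 with hAdef
  set B := ∫ t in (0:ℝ)..zF, (v t) ^ 2 with hBdef
  have hAnn : 0 ≤ A :=
    intervalIntegral.integral_nonneg hzF.le fun t ht =>
      mul_nonneg (hDnn t ht) (sq_nonneg _)
  have hBnn : 0 ≤ B :=
    intervalIntegral.integral_nonneg hzF.le fun t ht => sq_nonneg _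
  -- Step A : pointwise bound
  have hv'absInt : IntervalIntegrable (fun t => |v' t|) volume 0 zF := by
    apply ContinuousOn.intervalIntegrable
    rw [huIcc]; exact hv'.abs
  have hstepA : ∀ x ∈ Set.Icc (0:ℝ) zF, |v 0| ≤ |v x| + ∫ t in (0:ℝ)..zF, |v' t| := by
    intro x hx
    have hxIcc : Set.uIcc (0:ℝ) x ⊆ Set.Icc 0 zF := by
      rw [Set.uIcc_of_le hx.1]; exact Set.Icc_subset_Icc le_rfl hx.2
    have hint : IntervalIntegrable v' volume 0 x :=
      ContinuousOn.intervalIntegrable (hv'.mono hxIcc)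
    have hFTC : ∫ t in (0:ℝ)..x, v' t = v x - v 0 :=
      intervalIntegral.integral_eq_sub_of_hasDerivAt (fun t ht => hv t (hxIcc ht)) hint
    have h1 : |v 0| ≤ |v x| + |v x - v 0| := by
      have := abs_add_le (v x) (v 0 - v x)
      have h' : |v 0 - v x| = |v x - v 0| := abs_sub_comm _ _
      simp only [add_sub_cancel] at this
      linarith
    have h2 : |∫ t in (0:ℝ)..x, v' t| ≤ ∫ t in (0:ℝ)..x, |v' t| :=
      intervalIntegral.abs_integral_le_integral_abs hx.1
    have h3 : (∫ t in (0:ℝ)..x, |v' t|) ≤ ∫ t in (0:ℝ)..zF, |v' t| := by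
      have hi1 : IntervalIntegrable (fun t => |v' t|) volume 0 x :=
        ContinuousOn.intervalIntegrable (by rw [Set.uIcc_of_le hx.1]
                                            exact (hv'.mono (Set.Icc_subset_Icc le_rfl hx.2)).abs)
      have hi2 : IntervalIntegrable (fun t => |v' t|) volume x zF :=
        ContinuousOn.intervalIntegrable (by rw [Set.uIcc_of_le hx.2]
                                            exact (hv'.mono (Set.Icc_subset_Icc hx.1 le_rfl)).abs)
      rw [← intervalIntegral.integral_add_adjacent_intervals hi1 hi2]
      have : 0 ≤ ∫ t in x..zF, |v' t| :=
        intervalIntegral.integral_nonneg hx.2 fun t ht => abs_nonneg _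
      linarith
    rw [hFTC] at h2
    linarith
  -- Step B : integrate in x
  have hB : zF * |v 0| ≤ (∫ x in (0:ℝ)..zF, |v x|) + zF * ∫ t in (0:ℝ)..zF, |v' t| := by
    set C := ∫ t in (0:ℝ)..zF, |v' t| with hCdef
    have hvabsInt : IntervalIntegrable (fun x => |v x|) volume 0 zF := by
      apply ContinuousOn.intervalIntegrable
      rw [huIcc]; exact hvcont.abs
    have hgInt : IntervalIntegrable (fun x => |v x| + C) volume 0 zF :=
      hvabsInt.add intervalIntegrable_const
    have h := intervalIntegral.integral_mono_on hzF.le intervalIntegrable_const hgInt hstepA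
    rw [intervalIntegral.integral_const] at h
    rw [intervalIntegral.integral_add hvabsInt intervalIntegrable_const,
      intervalIntegral.integral_const] at h
    simp only [smul_eq_mul, sub_zero] at h
    linarith
  -- Cauchy-Schwarz setup on Ioo
  have hmeas : MeasurableSet (Set.Ioo (0:ℝ) zF) := measurableSet_Ioo
  set μ : Measure ℝ := volume.restrict (Set.Ioo 0 zF) with hμdef
  have haemem : ∀ᵐ x ∂μ, x ∈ Set.Ioo (0:ℝ) zF := ae_restrict_mem hmeas
  have hIcc_of_Ioo : ∀ x ∈ Set.Ioo (0:ℝ) zF, x ∈ Set.Ico (0:ℝ) zF :=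
    fun x hx => ⟨hx.1.le, hx.2⟩
  have hsqrtD : ContinuousOn (fun x => Real.sqrt (D x)) (Set.Icc 0 zF) :=
    Real.continuous_sqrt.comp_continuousOn hDcont
  -- interval integrals as integrals over Ioo
  have hIoo : ∀ h : ℝ → ℝ, (∫ t in (0:ℝ)..zF, h t) = ∫ t in Set.Ioo (0:ℝ) zF, h t := by
    intro h
    rw [intervalIntegral.integral_of_le hzF.le, integral_Ioc_eq_integral_Ioo]
  -- CS for v'
  have hCS1 : (∫ t in (0:ℝ)..zF, |v' t|) ≤ IofD zF D * Real.sqrt A := by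
    set f : ℝ → ℝ := fun x => (Real.sqrt (D x))⁻¹ with hfdef
    set g : ℝ → ℝ := fun x => Real.sqrt (D x) * |v' x| with hgdef
    have hfg : ∀ x ∈ Set.Ioo (0:ℝ) zF, f x * g x = |v' x| := by
      intro x hx
      have hD := hDpos x (hIcc_of_Ioo x hx)
      have hs : Real.sqrt (D x) ≠ 0 := (Real.sqrt_pos.mpr hD).ne'
      simp only [hfdef, hgdef]
      field_simp
    have hf2 : ∀ x ∈ Set.Ioo (0:ℝ) zF, f x ^ 2 = 1 / D x := by
      intro x hx
      have hD := hDpos x (hIcc_of_Ioo x hx)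
      simp only [hfdef]
      rw [← Real.sqrt_inv, Real.sq_sqrt (by positivity), one_div]
    have hg2 : ∀ x ∈ Set.Ioo (0:ℝ) zF, g x ^ 2 = D x * (v' x) ^ 2 := by
      intro x hx
      have hD := hDpos x (hIcc_of_Ioo x hx)
      simp only [hgdef]
      rw [mul_pow, Real.sq_sqrt hD.le, sq_abs]
    have hfcont : ContinuousOn f (Set.Ioo 0 zF) := by
      apply ContinuousOn.inv₀ (hsqrtD.mono hIooIcc)
      intro x hx
      exact (Real.sqrt_pos.mpr (hDpos x (hIcc_of_Ioo x hx))).ne'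
    have hgcont : ContinuousOn g (Set.Icc 0 zF) := hsqrtD.mul hv'.abs
    have hfm : AEStronglyMeasurable f μ := hfcont.aestronglyMeasurable hmeas
    have hgm : AEStronglyMeasurable g μ :=
      (hgcont.mono hIooIcc).aestronglyMeasurable hmeas
    have hf0 : 0 ≤ᵐ[μ] f := Filter.Eventually.of_forall fun x => by positivity
    have hg0 : 0 ≤ᵐ[μ] g := Filter.Eventually.of_forall fun x =>
      mul_nonneg (Real.sqrt_nonneg _) (abs_nonneg _)
    have h1Dint : IntegrableOn (fun x => 1 / D x) (Set.Ioo 0 zF) volume :=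
      (hDint.1).mono_set Set.Ioo_subset_Ioc_self
    have hf2int : Integrable (fun x => f x ^ 2) μ := by
      apply (h1Dint : Integrable _ μ).congr
      filter_upwards [haemem] with x hx
      exact (hf2 x hx).symm
    have hDvInt : IntegrableOn (fun x => D x * (v' x) ^ 2) (Set.Ioo 0 zF) volume :=
      ((hDcont.mul (hv'.pow 2)).integrableOn_Icc).mono_set hIooIcc
    have hg2int : Integrable (fun x => g x ^ 2) μ := by
      apply (hDvInt : Integrable _ μ).congr
      filter_upwards [haemem] with x hx
      exact (hg2 x hx).symm
    have key := cs_integral hf0 hg0 hfm hgm hf2int hg2int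
    have e1 : (∫ x, f x * g x ∂μ) = ∫ t in (0:ℝ)..zF, |v' t| := by
      rw [hIoo]
      exact setIntegral_congr_fun hmeas hfg
    have e2 : (∫ x, f x ^ 2 ∂μ) = ∫ t in (0:ℝ)..zF, 1 / D t := by
      rw [hIoo]
      exact setIntegral_congr_fun hmeas hf2
    have e3 : (∫ x, g x ^ 2 ∂μ) = A := by
      rw [hAdef, hIoo]
      exact setIntegral_congr_fun hmeas hg2
    rw [e1, e2, e3] at key
    exact key
  -- CS for v
  have hCS2 : (∫ x in (0:ℝ)..zF, |v x|) ≤ Real.sqrt zF * Real.sqrt B := by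
    set f : ℝ → ℝ := fun _ => (1:ℝ) with hfdef
    set g : ℝ → ℝ := fun x => |v x| with hgdef
    have hfm : AEStronglyMeasurable f μ := aestronglyMeasurable_const
    have hgm : AEStronglyMeasurable g μ :=
      ((hvcont.abs).mono hIooIcc).aestronglyMeasurable hmeas
    have hf0 : 0 ≤ᵐ[μ] f := Filter.Eventually.of_forall fun x => zero_le_one
    have hg0 : 0 ≤ᵐ[μ] g := Filter.Eventually.of_forall fun x => abs_nonneg _
    have hf2int : Integrable (fun x => f x ^ 2) μ := by
      simp only [hfdef, one_pow]
      exact integrable_const _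
    have hg2int : Integrable (fun x => g x ^ 2) μ := by
      have : IntegrableOn (fun x => (v x) ^ 2) (Set.Ioo 0 zF) volume :=
        ((hvcont.pow 2).integrableOn_Icc).mono_set hIooIcc
      apply (this : Integrable _ μ).congr
      filter_upwards [] with x
      simp [hgdef, sq_abs]
    have key := cs_integral hf0 hg0 hfm hgm hf2int hg2int
    have e1 : (∫ x, f x * g x ∂μ) = ∫ x in (0:ℝ)..zF, |v x| := by
      rw [hIoo]
      refine setIntegral_congr_fun hmeas fun x hx => ?_
      simp [hfdef, hgdef]
    have e2 : (∫ x, f x ^ 2 ∂μ) = zF := by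
      simp only [hfdef, one_pow]
      rw [integral_const, hμdef, measureReal_restrict_apply_univ, Real.volume_real_Ioo, smul_eq_mul, mul_one,
        sub_zero, max_eq_left hzF.le]
    have e3 : (∫ x, g x ^ 2 ∂μ) = B := by
      rw [hBdef, hIoo]
      refine setIntegral_congr_fun hmeas fun x hx => ?_
      simp [hgdef, sq_abs]
    rw [e1, e2, e3] at key
    exact key
  -- Combine
  set N := normAlpha zF D v v' with hNdef
  have hNeq : N = Real.sqrt (A + B) := rfl
  have hsA : Real.sqrt A ≤ N := by
    rw [hNeq]; exact Real.sqrt_le_sqrt (by linarith)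
  have hsB : Real.sqrt B ≤ N := by
    rw [hNeq]; exact Real.sqrt_le_sqrt (by linarith)
  have hNnn : 0 ≤ N := by rw [hNeq]; exact Real.sqrt_nonneg _
  have hInn : 0 ≤ IofD zF D := Real.sqrt_nonneg _
  have hszF : 0 < Real.sqrt zF := Real.sqrt_pos.mpr hzF
  have hmul : Real.sqrt zF * Real.sqrt zF = zF := Real.mul_self_sqrt hzF.le
  -- |v 0| ≤ (1/zF) * ∫|v| + ∫|v'|
  have hfinal : zF * |v 0| ≤ Real.sqrt zF * Real.sqrt B + zF * (IofD zF D * Real.sqrt A) := by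
    have h2 : zF * (∫ t in (0:ℝ)..zF, |v' t|) ≤ zF * (IofD zF D * Real.sqrt A) :=
      mul_le_mul_of_nonneg_left hCS1 hzF.le
    linarith
  have hgoal : zF * |v 0| ≤ zF * ((1 / Real.sqrt zF + IofD zF D) * N) := by
    have h1 : Real.sqrt zF * Real.sqrt B ≤ Real.sqrt zF * N :=
      mul_le_mul_of_nonneg_left hsB hszF.le
    have h2 : IofD zF D * Real.sqrt A ≤ IofD zF D * N :=
      mul_le_mul_of_nonneg_left hsA hInn
    have h3 : Real.sqrt zF * N = zF * ((1 / Real.sqrt zF) * N) := by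
      field_simp
      nlinarith [hmul]
    nlinarith [mul_le_mul_of_nonneg_left h2 hzF.le]
  have := (mul_le_mul_iff_right₀ hzF).mp hgoal
  exact this
end

section
/- Let z_F > 0, let D : ℝ → ℝ be continuous on [0,z_F] with D(z) > 0 for all z ∈ [0,z_F) and with 1/D integrable on (0,z_F), set I(D) = (∫₀^{z_F} 1/D(z) dz)^{1/2}, and let f, 𝒢, ℱ, M_α > 0 be real constants. Define the bilinear form 𝒜(v,φ) = (𝒢/f)∫₀^{z_F} v·φ + (1/f)∫₀^{z_F} D·v'·φ' + ℱ·φ(z_F)·v(z_F) − ℱ·∫₀^{z_F} v·φ' − (M_α/f)·∫₀^{z_F} D·v·φ'. Then for all continuously differentiable v, φ on [0,z_F], |𝒜(v,φ)| ≤ C·‖v‖_α·‖φ‖_α, where C = 𝒢/f + 1/f + ℱ·(1/√z_F + 2·I(D))² + ℱ·(1/√z_F + 2·I(D))·I(D) + (M_α/f)·(sup_{z∈[0,z_F]} D(z))^{1/2}. -/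
open MeasureTheory

section aux
variable {zF : ℝ} {D : ℝ → ℝ}

lemma cs_int (a b : ℝ) (hab : a ≤ b) (f g : ℝ → ℝ)
    (hf2 : IntervalIntegrable (fun x => f x ^ 2) volume a b)
    (hg2 : IntervalIntegrable (fun x => g x ^ 2) volume a b)
    (hfg : IntervalIntegrable (fun x => f x * g x) volume a b) :
    |∫ x in a..b, f x * g x| ≤
      Real.sqrt (∫ x in a..b, f x ^ 2) * Real.sqrt (∫ x in a..b, g x ^ 2) := by
  set A := ∫ x in a..b, f x ^ 2 with hA
  set C := ∫ x in a..b, g x ^ 2 with hC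
  set B := ∫ x in a..b, f x * g x with hB
  have hAnn : 0 ≤ A := intervalIntegral.integral_nonneg hab (fun u _ => sq_nonneg _)
  have hCnn : 0 ≤ C := intervalIntegral.integral_nonneg hab (fun u _ => sq_nonneg _)
  have hq : ∀ t : ℝ, 0 ≤ A * (t * t) + (2 * B) * t + C := by
    intro t
    have h0 : 0 ≤ ∫ x in a..b, (t * f x + g x) ^ 2 :=
      intervalIntegral.integral_nonneg hab (fun u _ => sq_nonneg _)
    have heq : (∫ x in a..b, (t * f x + g x) ^ 2)
        = t ^ 2 * A + (2 * t * B + C) := by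
      have hrw : (fun x => (t * f x + g x) ^ 2)
          = fun x => t ^ 2 * f x ^ 2 + (2 * t * (f x * g x) + g x ^ 2) := by
        funext x; ring
      rw [hrw, intervalIntegral.integral_add (hf2.const_mul _) ((hfg.const_mul _).add hg2),
        intervalIntegral.integral_add (hfg.const_mul _) hg2,
        intervalIntegral.integral_const_mul, intervalIntegral.integral_const_mul]
    nlinarith [h0, heq]
  have hd := discrim_le_zero hq
  rw [discrim] at hd
  have hB2 : B ^ 2 ≤ A * C := by nlinarith
  calc |B| = Real.sqrt (B ^ 2) := (Real.sqrt_sq_eq_abs B).symm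
    _ ≤ Real.sqrt (A * C) := Real.sqrt_le_sqrt hB2
    _ = Real.sqrt A * Real.sqrt C := Real.sqrt_mul hAnn C

/-- D is nonneg on the closed interval. -/
lemma Dnonneg (hzF : 0 < zF) (hDcont : ContinuousOn D (Set.Icc 0 zF))
    (hDpos : ∀ z ∈ Set.Ico 0 zF, 0 < D z) :
    ∀ z ∈ Set.Icc 0 zF, 0 ≤ D z := by
  intro z hz
  rcases lt_or_eq_of_le hz.2 with h | h
  · exact (hDpos z ⟨hz.1, h⟩).le
  · subst h
    have hc : ContinuousWithinAt D (Set.Ico 0 z) z :=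
      (hDcont z hz).mono Set.Ico_subset_Icc_self
    have hne : (nhdsWithin z (Set.Ico 0 z)).NeBot := by
      apply mem_closure_iff_nhdsWithin_neBot.mp
      rw [closure_Ico (by linarith : (0:ℝ) ≠ z)]
      exact ⟨hz.1, le_refl z⟩
    refine ge_of_tendsto hc ?_
    filter_upwards [self_mem_nhdsWithin] with x hx
    exact (hDpos x hx).le

/-- a.e. congruence from equality on Ico. -/
lemma ae_from_Ico (hzF : 0 < zF) {F G : ℝ → ℝ} (h : ∀ x ∈ Set.Ico 0 zF, F x = G x) :
    ∀ᵐ x ∂(volume : Measure ℝ), x ∈ Set.uIoc 0 zF → F x = G x := by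
  have h1 : ∀ᵐ x ∂(volume : Measure ℝ), x ≠ zF := by
    have : (volume : Measure ℝ) {zF} = 0 := measure_singleton zF
    exact measure_eq_zero_iff_ae_notMem.mp this
  filter_upwards [h1] with x hx hmem
  rw [Set.uIoc_of_le hzF.le] at hmem
  exact h x ⟨hmem.1.le, lt_of_le_of_ne hmem.2 hx⟩

lemma intervalIntegrable_congr_Ico (hzF : 0 < zF) {F G : ℝ → ℝ}
    (h : ∀ x ∈ Set.Ico 0 zF, F x = G x)
    (hF : IntervalIntegrable F volume 0 zF) : IntervalIntegrable G volume 0 zF := by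
  refine hF.congr_ae ?_
  have := ae_from_Ico hzF h
  exact (ae_restrict_iff' measurableSet_uIoc).mpr this

end aux

section key
variable {zF : ℝ} {D : ℝ → ℝ}

/-- `∫ |w| ≤ I(D) * sqrt (∫ D w²)`. -/
lemma L1 (hzF : 0 < zF) (hDcont : ContinuousOn D (Set.Icc 0 zF))
    (hDpos : ∀ z ∈ Set.Ico 0 zF, 0 < D z)
    (hDint : IntervalIntegrable (fun z => 1 / D z) volume 0 zF)
    (w : ℝ → ℝ) (hw : ContinuousOn w (Set.Icc 0 zF)) :
    (∫ x in (0:ℝ)..zF, |w x|) ≤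
      IofD zF D * Real.sqrt (∫ x in (0:ℝ)..zF, D x * (w x) ^ 2) := by
  have hIcc : Set.uIcc (0:ℝ) zF = Set.Icc 0 zF := Set.uIcc_of_le hzF.le
  have hD0 := Dnonneg hzF hDcont hDpos
  set f : ℝ → ℝ := fun x => (Real.sqrt (D x))⁻¹ with hf
  set g : ℝ → ℝ := fun x => Real.sqrt (D x) * |w x| with hg
  have hsD : ContinuousOn (fun x => Real.sqrt (D x)) (Set.Icc 0 zF) :=
    Real.continuous_sqrt.comp_continuousOn hDcont
  have hgC : ContinuousOn g (Set.Icc 0 zF) := hsD.mul hw.abs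
  have hg2 : IntervalIntegrable (fun x => g x ^ 2) volume 0 zF :=
    (ContinuousOn.intervalIntegrable (by rw [hIcc]; exact hgC.pow 2))
  have hf2 : IntervalIntegrable (fun x => f x ^ 2) volume 0 zF := by
    refine intervalIntegrable_congr_Ico hzF (F := fun z => 1 / D z) ?_ hDint
    intro x hx
    have hD : 0 < D x := hDpos x hx
    simp only [hf]
    rw [← Real.sqrt_inv]
    rw [Real.sq_sqrt (by positivity)]
    simp [one_div]
  have hfg : IntervalIntegrable (fun x => f x * g x) volume 0 zF := by
    refine intervalIntegrable_congr_Ico hzF (F := fun x => |w x|) ?_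
      (ContinuousOn.intervalIntegrable (by rw [hIcc]; exact hw.abs))
    intro x hx
    have hD : 0 < D x := hDpos x hx
    have hs : Real.sqrt (D x) ≠ 0 := by positivity
    simp only [hf, hg]
    field_simp
  have heq1 : (∫ x in (0:ℝ)..zF, |w x|) = ∫ x in (0:ℝ)..zF, f x * g x := by
    refine intervalIntegral.integral_congr_ae (ae_from_Ico hzF ?_)
    intro x hx
    have hD : 0 < D x := hDpos x hx
    have hs : Real.sqrt (D x) ≠ 0 := by positivity
    simp only [hf, hg]
    field_simp
  have heq2 : (∫ x in (0:ℝ)..zF, f x ^ 2) = ∫ x in (0:ℝ)..zF, 1 / D x := by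
    refine intervalIntegral.integral_congr_ae (ae_from_Ico hzF ?_)
    intro x hx
    have hD : 0 < D x := hDpos x hx
    simp only [hf]
    rw [← Real.sqrt_inv, Real.sq_sqrt (by positivity)]
    simp [one_div]
  have heq3 : (∫ x in (0:ℝ)..zF, g x ^ 2) = ∫ x in (0:ℝ)..zF, D x * (w x) ^ 2 := by
    refine intervalIntegral.integral_congr (fun x hx => ?_)
    rw [hIcc] at hx
    simp only [hg]
    rw [mul_pow, Real.sq_sqrt (hD0 x hx), sq_abs]
  have hcs := cs_int 0 zF hzF.le f g hf2 hg2 hfg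
  rw [heq2, heq3] at hcs
  calc (∫ x in (0:ℝ)..zF, |w x|) = ∫ x in (0:ℝ)..zF, f x * g x := heq1
    _ ≤ |∫ x in (0:ℝ)..zF, f x * g x| := le_abs_self _
    _ ≤ Real.sqrt (∫ x in (0:ℝ)..zF, 1 / D x) *
        Real.sqrt (∫ x in (0:ℝ)..zF, D x * (w x) ^ 2) := hcs
    _ = IofD zF D * Real.sqrt (∫ x in (0:ℝ)..zF, D x * (w x) ^ 2) := rfl

end key

section key2
variable {zF : ℝ} {D : ℝ → ℝ}

/-- pointwise bound `|w z| ≤ (1/√zF + 2 I(D)) * ‖w‖_α`. -/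
lemma L2 (hzF : 0 < zF) (hDcont : ContinuousOn D (Set.Icc 0 zF))
    (hDpos : ∀ z ∈ Set.Ico 0 zF, 0 < D z)
    (hDint : IntervalIntegrable (fun z => 1 / D z) volume 0 zF)
    (w w' : ℝ → ℝ)
    (hw : ∀ z ∈ Set.Icc 0 zF, HasDerivAt w (w' z) z)
    (hw' : ContinuousOn w' (Set.Icc 0 zF)) :
    ∀ z ∈ Set.Icc 0 zF,
      |w z| ≤ (1 / Real.sqrt zF + 2 * IofD zF D) * normAlpha zF D w w' := by
  intro z hz
  have hIcc : Set.uIcc (0:ℝ) zF = Set.Icc 0 zF := Set.uIcc_of_le hzF.le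
  have hwC : ContinuousOn w (Set.Icc 0 zF) :=
    fun x hx => ((hw x hx).continuousAt).continuousWithinAt
  set P := ∫ x in (0:ℝ)..zF, D x * (w' x) ^ 2 with hP
  set Q := ∫ x in (0:ℝ)..zF, (w x) ^ 2 with hQ
  set I := IofD zF D with hI
  set N := normAlpha zF D w w' with hN
  have hPnn : 0 ≤ P := intervalIntegral.integral_nonneg hzF.le
    (fun u hu => mul_nonneg (Dnonneg hzF hDcont hDpos u hu) (sq_nonneg _))
  have hQnn : 0 ≤ Q := intervalIntegral.integral_nonneg hzF.le (fun u _ => sq_nonneg _)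
  have hInn : 0 ≤ I := Real.sqrt_nonneg _
  have hNnn : 0 ≤ N := Real.sqrt_nonneg _
  have hNP : Real.sqrt P ≤ N := Real.sqrt_le_sqrt (by linarith)
  have hNQ : Real.sqrt Q ≤ N := Real.sqrt_le_sqrt (by linarith)
  have habs' : (∫ x in (0:ℝ)..zF, |w' x|) ≤ I * Real.sqrt P :=
    L1 hzF hDcont hDpos hDint w' hw'
  -- |w z| ≤ |w y| + I √P for all y in Icc
  have hkey : ∀ y ∈ Set.Icc 0 zF, |w z| ≤ |w y| + I * Real.sqrt P := by
    intro y hy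
    have hsub : Set.uIcc y z ⊆ Set.Icc 0 zF := Set.uIcc_subset_Icc hy hz
    have hftc : ∫ x in y..z, w' x = w z - w y :=
      intervalIntegral.integral_eq_sub_of_hasDerivAt
        (fun x hx => hw x (hsub hx))
        (ContinuousOn.intervalIntegrable (hw'.mono hsub))
    have habsint : |∫ x in y..z, w' x| ≤ ∫ x in (0:ℝ)..zF, |w' x| := by
      have hint : IntervalIntegrable (fun x => |w' x|) volume 0 zF :=
        ContinuousOn.intervalIntegrable (by rw [hIcc]; exact hw'.abs)
      have hnn : 0 ≤ᶠ[ae (volume.restrict (Set.Ioc (0:ℝ) zF))] fun x => |w' x| :=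
        Filter.Eventually.of_forall (fun x => abs_nonneg _)
      rcases le_total y z with hyz | hzy
      · calc |∫ x in y..z, w' x| ≤ ∫ x in y..z, |w' x| :=
            intervalIntegral.abs_integral_le_integral_abs hyz
          _ ≤ ∫ x in (0:ℝ)..zF, |w' x| :=
            intervalIntegral.integral_mono_interval hy.1 hyz hz.2 hnn hint
      · rw [intervalIntegral.integral_symm, abs_neg]
        calc |∫ x in z..y, w' x| ≤ ∫ x in z..y, |w' x| :=
            intervalIntegral.abs_integral_le_integral_abs hzy
          _ ≤ ∫ x in (0:ℝ)..zF, |w' x| :=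
            intervalIntegral.integral_mono_interval hz.1 hzy hy.2 hnn hint
    have h1 : |w z - w y| ≤ I * Real.sqrt P := by
      rw [← hftc]; exact le_trans habsint habs'
    calc |w z| = |w y + (w z - w y)| := by ring_nf
      _ ≤ |w y| + |w z - w y| := abs_add_le _ _
      _ ≤ |w y| + I * Real.sqrt P := by linarith
  -- integrate over y
  have hint1 : IntervalIntegrable (fun _ : ℝ => |w z|) volume 0 zF :=
    intervalIntegrable_const
  have hint2 : IntervalIntegrable (fun y => |w y| + I * Real.sqrt P) volume 0 zF :=
    (ContinuousOn.intervalIntegrable (u := fun y => |w y|)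
      (by rw [hIcc]; exact hwC.abs)).add intervalIntegrable_const
  have hmono := intervalIntegral.integral_mono_on hzF.le hint1 hint2 hkey
  rw [intervalIntegral.integral_const,
    intervalIntegral.integral_add
      (ContinuousOn.intervalIntegrable (by rw [hIcc]; exact hwC.abs))
      intervalIntegrable_const,
    intervalIntegral.integral_const] at hmono
  simp only [smul_eq_mul, sub_zero] at hmono
  -- ∫ |w| ≤ √zF √Q
  have hl1 : (∫ y in (0:ℝ)..zF, |w y|) ≤ Real.sqrt zF * Real.sqrt Q := by
    have hcs := cs_int 0 zF hzF.le (fun _ => 1) (fun x => |w x|)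
      (by simpa using (intervalIntegrable_const (c := (1:ℝ))))
      (ContinuousOn.intervalIntegrable (by rw [hIcc]; exact (hwC.abs.pow 2)))
      (by simpa using (ContinuousOn.intervalIntegrable (u := fun y => |w y|)
        (by rw [hIcc]; exact hwC.abs)))
    simp only [one_pow, one_mul, sq_abs] at hcs
    rw [intervalIntegral.integral_const] at hcs
    simp only [smul_eq_mul, sub_zero, mul_one] at hcs
    exact le_trans (le_abs_self _) hcs
  -- combine
  set s := Real.sqrt zF with hs
  have hspos : 0 < s := Real.sqrt_pos.mpr hzF
  have hss : s * s = zF := Real.mul_self_sqrt hzF.le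
  have h2 : zF * |w z| ≤ s * Real.sqrt Q + zF * (I * Real.sqrt P) := by linarith
  have h4 : (|w z| - I * Real.sqrt P) * s ≤ Real.sqrt Q := by
    nlinarith [h2, hss, hspos]
  have h5 : |w z| - I * Real.sqrt P ≤ Real.sqrt Q / s := (le_div_iff₀ hspos).mpr h4
  have hring : (1 / s) * Real.sqrt Q = Real.sqrt Q / s := by ring
  have h3 : |w z| ≤ (1 / s) * Real.sqrt Q + I * Real.sqrt P := by linarith
  have hsq : Real.sqrt Q ≤ N := hNQ
  nlinarith [h3, mul_le_mul_of_nonneg_left hNQ (by positivity : (0:ℝ) ≤ 1 / s),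
    mul_le_mul_of_nonneg_left hNP hInn]

end key2

/-- The bilinear form
`𝒜(v,φ) = (𝒢/f)∫ vφ + (1/f)∫ D v'φ' + ℱ φ(z_F) v(z_F) − ℱ ∫ v φ' − (M_α/f) ∫ D v φ'`. -/
noncomputable def Abil (zF f Gc Fc Ma : ℝ) (D v v' φ φ' : ℝ → ℝ) : ℝ :=
  (Gc / f) * (∫ t in (0:ℝ)..zF, v t * φ t)
    + (1 / f) * (∫ t in (0:ℝ)..zF, D t * v' t * φ' t)
    + Fc * (φ zF * v zF)
    - Fc * (∫ t in (0:ℝ)..zF, v t * φ' t)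
    - (Ma / f) * (∫ t in (0:ℝ)..zF, D t * v t * φ' t)

theorem stmt_2 (zF : ℝ) (hzF : 0 < zF) (D : ℝ → ℝ)
    (hDcont : ContinuousOn D (Set.Icc 0 zF))
    (hDpos : ∀ z ∈ Set.Ico 0 zF, 0 < D z)
    (hDint : IntervalIntegrable (fun z => 1 / D z) volume 0 zF)
    (f Gc Fc Ma : ℝ) (hf : 0 < f) (hGc : 0 < Gc) (hFc : 0 < Fc) (hMa : 0 < Ma)
    (v v' φ φ' : ℝ → ℝ)
    (hv : ∀ z ∈ Set.Icc 0 zF, HasDerivAt v (v' z) z)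
    (hv' : ContinuousOn v' (Set.Icc 0 zF))
    (hφ : ∀ z ∈ Set.Icc 0 zF, HasDerivAt φ (φ' z) z)
    (hφ' : ContinuousOn φ' (Set.Icc 0 zF)) :
    |Abil zF f Gc Fc Ma D v v' φ φ'| ≤
      (Gc / f + 1 / f + Fc * (1 / Real.sqrt zF + 2 * IofD zF D) ^ 2
          + Fc * (1 / Real.sqrt zF + 2 * IofD zF D) * IofD zF D
          + (Ma / f) * Real.sqrt (sSup (D '' Set.Icc 0 zF)))
        * normAlpha zF D v v' * normAlpha zF D φ φ' := by
  have hIcc : Set.uIcc (0:ℝ) zF = Set.Icc 0 zF := Set.uIcc_of_le hzF.le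
  have hD0 := Dnonneg hzF hDcont hDpos
  have hvC : ContinuousOn v (Set.Icc 0 zF) :=
    fun x hx => ((hv x hx).continuousAt).continuousWithinAt
  have hφC : ContinuousOn φ (Set.Icc 0 zF) :=
    fun x hx => ((hφ x hx).continuousAt).continuousWithinAt
  have hsD : ContinuousOn (fun x => Real.sqrt (D x)) (Set.Icc 0 zF) :=
    Real.continuous_sqrt.comp_continuousOn hDcont
  have intC : ∀ {u : ℝ → ℝ}, ContinuousOn u (Set.Icc 0 zF) →
      IntervalIntegrable u volume 0 zF := fun hu =>
    ContinuousOn.intervalIntegrable (by rw [hIcc]; exact hu)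
  set I := IofD zF D with hI
  set K := 1 / Real.sqrt zF + 2 * I with hK
  set Nv := normAlpha zF D v v' with hNv
  set Nφ := normAlpha zF D φ φ' with hNφ
  set Pv := ∫ t in (0:ℝ)..zF, D t * (v' t) ^ 2 with hPv
  set Qv := ∫ t in (0:ℝ)..zF, (v t) ^ 2 with hQv
  set Pφ := ∫ t in (0:ℝ)..zF, D t * (φ' t) ^ 2 with hPφ
  set Qφ := ∫ t in (0:ℝ)..zF, (φ t) ^ 2 with hQφ
  have hPvnn : 0 ≤ Pv := intervalIntegral.integral_nonneg hzF.le
    (fun u hu => mul_nonneg (hD0 u hu) (sq_nonneg _))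
  have hQvnn : 0 ≤ Qv := intervalIntegral.integral_nonneg hzF.le (fun u _ => sq_nonneg _)
  have hPφnn : 0 ≤ Pφ := intervalIntegral.integral_nonneg hzF.le
    (fun u hu => mul_nonneg (hD0 u hu) (sq_nonneg _))
  have hQφnn : 0 ≤ Qφ := intervalIntegral.integral_nonneg hzF.le (fun u _ => sq_nonneg _)
  have hInn : 0 ≤ I := Real.sqrt_nonneg _
  have hNvnn : 0 ≤ Nv := Real.sqrt_nonneg _
  have hNφnn : 0 ≤ Nφ := Real.sqrt_nonneg _
  have hKnn : 0 ≤ K := by positivity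
  have hNPv : Real.sqrt Pv ≤ Nv := Real.sqrt_le_sqrt (by linarith)
  have hNQv : Real.sqrt Qv ≤ Nv := Real.sqrt_le_sqrt (by linarith)
  have hNPφ : Real.sqrt Pφ ≤ Nφ := Real.sqrt_le_sqrt (by linarith)
  have hNQφ : Real.sqrt Qφ ≤ Nφ := Real.sqrt_le_sqrt (by linarith)
  -- sup of D
  set S := sSup (D '' Set.Icc 0 zF) with hS
  have hbdd : BddAbove (D '' Set.Icc 0 zF) :=
    (isCompact_Icc.image_of_continuousOn hDcont).bddAbove
  have hsup : ∀ x ∈ Set.Icc 0 zF, D x ≤ S :=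
    fun x hx => le_csSup hbdd ⟨x, hx, rfl⟩
  have hSnn : 0 ≤ S := le_trans (hD0 0 ⟨le_refl 0, hzF.le⟩)
    (hsup 0 ⟨le_refl 0, hzF.le⟩)
  -- term 1
  have ha : |(Gc / f) * ∫ t in (0:ℝ)..zF, v t * φ t| ≤ (Gc / f) * (Nv * Nφ) := by
    have hcs := cs_int 0 zF hzF.le v φ (intC (hvC.pow 2)) (intC (hφC.pow 2))
      (intC (hvC.mul hφC))
    rw [abs_mul, abs_of_pos (div_pos hGc hf)]
    refine mul_le_mul_of_nonneg_left (le_trans hcs ?_) (div_pos hGc hf).le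
    exact mul_le_mul hNQv hNQφ (Real.sqrt_nonneg _) hNvnn
  -- term 2
  have hb : |(1 / f) * ∫ t in (0:ℝ)..zF, D t * v' t * φ' t| ≤ (1 / f) * (Nv * Nφ) := by
    have heq : (∫ t in (0:ℝ)..zF, D t * v' t * φ' t)
        = ∫ t in (0:ℝ)..zF, (Real.sqrt (D t) * v' t) * (Real.sqrt (D t) * φ' t) := by
      refine intervalIntegral.integral_congr (fun x hx => ?_)
      rw [hIcc] at hx
      have h := Real.mul_self_sqrt (hD0 x hx)
      linear_combination (-(v' x * φ' x)) * h
    have heqv : (∫ t in (0:ℝ)..zF, (Real.sqrt (D t) * v' t) ^ 2) = Pv := by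
      refine intervalIntegral.integral_congr (fun x hx => ?_)
      rw [hIcc] at hx
      rw [mul_pow, Real.sq_sqrt (hD0 x hx)]
    have heqφ : (∫ t in (0:ℝ)..zF, (Real.sqrt (D t) * φ' t) ^ 2) = Pφ := by
      refine intervalIntegral.integral_congr (fun x hx => ?_)
      rw [hIcc] at hx
      rw [mul_pow, Real.sq_sqrt (hD0 x hx)]
    have hcs := cs_int 0 zF hzF.le (fun t => Real.sqrt (D t) * v' t)
      (fun t => Real.sqrt (D t) * φ' t)
      (intC (((hsD.mul hv').pow 2))) (intC (((hsD.mul hφ').pow 2)))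
      (intC ((hsD.mul hv').mul (hsD.mul hφ')))
    rw [heqv, heqφ] at hcs
    rw [abs_mul, abs_of_pos (by positivity : (0:ℝ) < 1 / f), heq]
    refine mul_le_mul_of_nonneg_left (le_trans hcs ?_) (by positivity)
    exact mul_le_mul hNPv hNPφ (Real.sqrt_nonneg _) hNvnn
  -- term 3
  have h3v : |v zF| ≤ K * Nv :=
    L2 hzF hDcont hDpos hDint v v' hv hv' zF ⟨hzF.le, le_refl zF⟩
  have h3φ : |φ zF| ≤ K * Nφ :=
    L2 hzF hDcont hDpos hDint φ φ' hφ hφ' zF ⟨hzF.le, le_refl zF⟩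
  have hc : |Fc * (φ zF * v zF)| ≤ Fc * K ^ 2 * (Nv * Nφ) := by
    rw [abs_mul, abs_of_pos hFc, abs_mul]
    have h1 : |φ zF| * |v zF| ≤ (K * Nφ) * (K * Nv) :=
      mul_le_mul h3φ h3v (abs_nonneg _) (by positivity)
    calc Fc * (|φ zF| * |v zF|) ≤ Fc * ((K * Nφ) * (K * Nv)) :=
          mul_le_mul_of_nonneg_left h1 hFc.le
      _ = Fc * K ^ 2 * (Nv * Nφ) := by ring
  -- term 4
  have hvbd : ∀ x ∈ Set.Icc 0 zF, |v x| ≤ K * Nv :=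
    L2 hzF hDcont hDpos hDint v v' hv hv'
  have hd : |Fc * ∫ t in (0:ℝ)..zF, v t * φ' t| ≤ Fc * K * I * (Nv * Nφ) := by
    have h1 : |∫ t in (0:ℝ)..zF, v t * φ' t| ≤ ∫ t in (0:ℝ)..zF, |v t * φ' t| :=
      intervalIntegral.abs_integral_le_integral_abs hzF.le
    have h2 : (∫ t in (0:ℝ)..zF, |v t * φ' t|)
        ≤ ∫ t in (0:ℝ)..zF, (K * Nv) * |φ' t| := by
      refine intervalIntegral.integral_mono_on hzF.le
        (intC (hvC.mul hφ').abs) ((intC hφ'.abs).const_mul _) (fun x hx => ?_)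
      rw [abs_mul]
      exact mul_le_mul_of_nonneg_right (hvbd x hx) (abs_nonneg _)
    rw [intervalIntegral.integral_const_mul] at h2
    have h3 : (∫ t in (0:ℝ)..zF, |φ' t|) ≤ I * Real.sqrt Pφ :=
      L1 hzF hDcont hDpos hDint φ' hφ'
    have h4 : I * Real.sqrt Pφ ≤ I * Nφ := mul_le_mul_of_nonneg_left hNPφ hInn
    rw [abs_mul, abs_of_pos hFc]
    have h5 : |∫ t in (0:ℝ)..zF, v t * φ' t| ≤ (K * Nv) * (I * Nφ) := by
      have h6 : (K * Nv) * (∫ t in (0:ℝ)..zF, |φ' t|) ≤ (K * Nv) * (I * Nφ) :=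
        mul_le_mul_of_nonneg_left (le_trans h3 h4) (by positivity)
      linarith
    calc Fc * |∫ t in (0:ℝ)..zF, v t * φ' t| ≤ Fc * ((K * Nv) * (I * Nφ)) :=
          mul_le_mul_of_nonneg_left h5 hFc.le
      _ = Fc * K * I * (Nv * Nφ) := by ring
  -- term 5
  have he : |(Ma / f) * ∫ t in (0:ℝ)..zF, D t * v t * φ' t|
      ≤ (Ma / f) * Real.sqrt S * (Nv * Nφ) := by
    have heq : (∫ t in (0:ℝ)..zF, D t * v t * φ' t)
        = ∫ t in (0:ℝ)..zF, (Real.sqrt (D t) * v t) * (Real.sqrt (D t) * φ' t) := by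
      refine intervalIntegral.integral_congr (fun x hx => ?_)
      rw [hIcc] at hx
      have h := Real.mul_self_sqrt (hD0 x hx)
      linear_combination (-(v x * φ' x)) * h
    have heqv : (∫ t in (0:ℝ)..zF, (Real.sqrt (D t) * v t) ^ 2)
        = ∫ t in (0:ℝ)..zF, D t * (v t) ^ 2 := by
      refine intervalIntegral.integral_congr (fun x hx => ?_)
      rw [hIcc] at hx
      rw [mul_pow, Real.sq_sqrt (hD0 x hx)]
    have heqφ : (∫ t in (0:ℝ)..zF, (Real.sqrt (D t) * φ' t) ^ 2) = Pφ := by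
      refine intervalIntegral.integral_congr (fun x hx => ?_)
      rw [hIcc] at hx
      rw [mul_pow, Real.sq_sqrt (hD0 x hx)]
    have hcs := cs_int 0 zF hzF.le (fun t => Real.sqrt (D t) * v t)
      (fun t => Real.sqrt (D t) * φ' t)
      (intC (((hsD.mul hvC).pow 2))) (intC (((hsD.mul hφ').pow 2)))
      (intC ((hsD.mul hvC).mul (hsD.mul hφ')))
    rw [heqv, heqφ] at hcs
    have hDv2 : (∫ t in (0:ℝ)..zF, D t * (v t) ^ 2) ≤ S * Qv := by
      have := intervalIntegral.integral_mono_on hzF.le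
        (intC (hDcont.mul (hvC.pow 2))) ((intC (hvC.pow 2)).const_mul S)
        (fun x hx => mul_le_mul_of_nonneg_right (hsup x hx) (sq_nonneg _))
      rwa [intervalIntegral.integral_const_mul] at this
    have hsq : Real.sqrt (∫ t in (0:ℝ)..zF, D t * (v t) ^ 2)
        ≤ Real.sqrt S * Nv := by
      calc Real.sqrt (∫ t in (0:ℝ)..zF, D t * (v t) ^ 2)
          ≤ Real.sqrt (S * Qv) := Real.sqrt_le_sqrt hDv2
        _ = Real.sqrt S * Real.sqrt Qv := Real.sqrt_mul hSnn _
        _ ≤ Real.sqrt S * Nv :=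
            mul_le_mul_of_nonneg_left hNQv (Real.sqrt_nonneg _)
    rw [abs_mul, abs_of_pos (div_pos hMa hf), heq]
    calc (Ma / f) * |∫ t in (0:ℝ)..zF,
            (Real.sqrt (D t) * v t) * (Real.sqrt (D t) * φ' t)|
        ≤ (Ma / f) * ((Real.sqrt S * Nv) * Nφ) := by
          refine mul_le_mul_of_nonneg_left (le_trans hcs ?_) (div_pos hMa hf).le
          exact mul_le_mul hsq hNPφ (Real.sqrt_nonneg _) (by positivity)
      _ = (Ma / f) * Real.sqrt S * (Nv * Nφ) := by ring
  -- assemble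
  unfold Abil
  set a := (Gc / f) * ∫ t in (0:ℝ)..zF, v t * φ t with hha
  set b := (1 / f) * ∫ t in (0:ℝ)..zF, D t * v' t * φ' t with hhb
  set c := Fc * (φ zF * v zF) with hhc
  set d := Fc * ∫ t in (0:ℝ)..zF, v t * φ' t with hhd
  set e := (Ma / f) * ∫ t in (0:ℝ)..zF, D t * v t * φ' t with hhe
  have htri : |a + b + c - d - e| ≤ |a| + |b| + |c| + |d| + |e| := by
    calc |a + b + c - d - e| ≤ |a + b + c - d| + |e| := abs_sub _ _
      _ ≤ (|a + b + c| + |d|) + |e| := by linarith [abs_sub (a + b + c) d]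
      _ ≤ ((|a + b| + |c|) + |d|) + |e| := by linarith [abs_add_le (a + b) c]
      _ ≤ (((|a| + |b|) + |c|) + |d|) + |e| := by linarith [abs_add_le a b]
  calc |a + b + c - d - e| ≤ |a| + |b| + |c| + |d| + |e| := htri
    _ ≤ (Gc / f) * (Nv * Nφ) + (1 / f) * (Nv * Nφ) + Fc * K ^ 2 * (Nv * Nφ)
        + Fc * K * I * (Nv * Nφ) + (Ma / f) * Real.sqrt S * (Nv * Nφ) := by
        exact add_le_add (add_le_add (add_le_add (add_le_add ha hb) hc) hd) he
    _ = (Gc / f + 1 / f + Fc * K ^ 2 + Fc * K * I + (Ma / f) * Real.sqrt S)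
        * Nv * Nφ := by ring
end

section
/- Let z_F > 0, let D : ℝ → ℝ be continuous on [0,z_F] with D(z) > 0 for all z ∈ [0,z_F) and with 1/D integrable on (0,z_F), and let f, 𝒢, ℱ, M_α > 0 be real constants. Set Γ = (M_α/f)·(sup_{z∈[0,z_F]} D(z))^{1/2}, C₀ = (1/2)·min(𝒢/f, 1/f), and C₁ = Γ²/(2·min(𝒢/f, 1/f)). Then for every continuously differentiable v on [0,z_F] with v(0) = 0, the bilinear form satisfies 𝒜(v,v) ≥ C₀·‖v‖_α² − C₁·‖v‖₂², where ‖v‖₂ = (∫₀^{z_F} v(z)² dz)^{1/2} (weak coercivity of 𝒜). -/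
open MeasureTheory

/-- The L² norm `‖v‖₂ = (∫₀^{z_F} v²)^{1/2}`. -/
noncomputable def normL2 (zF : ℝ) (v : ℝ → ℝ) : ℝ :=
  Real.sqrt (∫ t in (0:ℝ)..zF, (v t) ^ 2)

set_option maxHeartbeats 1600000 in
theorem stmt_3 (zF : ℝ) (hzF : 0 < zF) (D : ℝ → ℝ)
    (hDcont : ContinuousOn D (Set.Icc 0 zF))
    (hDpos : ∀ z ∈ Set.Ico 0 zF, 0 < D z)
    (hDint : IntervalIntegrable (fun z => 1 / D z) volume 0 zF)
    (f Gc Fc Ma : ℝ) (hf : 0 < f) (hGc : 0 < Gc) (hFc : 0 < Fc) (hMa : 0 < Ma)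
    (Γ C₀ C₁ : ℝ)
    (hΓ : Γ = (Ma / f) * Real.sqrt (sSup (D '' Set.Icc 0 zF)))
    (hC₀ : C₀ = (1 / 2) * min (Gc / f) (1 / f))
    (hC₁ : C₁ = Γ ^ 2 / (2 * min (Gc / f) (1 / f)))
    (v v' : ℝ → ℝ)
    (hv : ∀ z ∈ Set.Icc 0 zF, HasDerivAt v (v' z) z)
    (hv' : ContinuousOn v' (Set.Icc 0 zF))
    (hv0 : v 0 = 0) :
    Abil zF f Gc Fc Ma D v v' v v' ≥
      C₀ * (normAlpha zF D v v') ^ 2 - C₁ * (normL2 zF v) ^ 2 := by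
  have huIcc : Set.uIcc (0:ℝ) zF = Set.Icc 0 zF := Set.uIcc_of_le hzF.le
  set m := min (Gc / f) (1 / f) with hm_def
  have hm : 0 < m := lt_min (div_pos hGc hf) (div_pos one_pos hf)
  set k := Ma / f with hk_def
  have hk : 0 < k := div_pos hMa hf
  -- D is nonnegative on [0, zF]
  have hD0 : ∀ t ∈ Set.Icc (0:ℝ) zF, 0 ≤ D t := by
    intro t ht
    rcases lt_or_eq_of_le ht.2 with h | h
    · exact (hDpos t ⟨ht.1, h⟩).le
    · subst h
      have hcl : t ∈ closure (Set.Ico (0:ℝ) t) := by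
        rw [closure_Ico (by linarith : (0:ℝ) ≠ t)]
        exact ⟨hzF.le, le_refl t⟩
      have hne : (nhdsWithin t (Set.Ico (0:ℝ) t)).NeBot :=
        mem_closure_iff_nhdsWithin_neBot.mp hcl
      have htend : Filter.Tendsto D (nhdsWithin t (Set.Ico (0:ℝ) t)) (nhds (D t)) :=
        (hDcont t ht).mono Set.Ico_subset_Icc_self
      exact ge_of_tendsto htend
        (Filter.eventually_of_mem self_mem_nhdsWithin fun x hx => (hDpos x hx).le)
  -- sup of D
  set S := sSup (D '' Set.Icc 0 zF) with hS_def
  have hbdd : BddAbove (D '' Set.Icc 0 zF) :=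
    (isCompact_Icc.image_of_continuousOn hDcont).bddAbove
  have hDS : ∀ t ∈ Set.Icc (0:ℝ) zF, D t ≤ S := fun t ht => le_csSup hbdd ⟨t, ht, rfl⟩
  have hS0 : 0 ≤ S :=
    le_trans (hD0 0 ⟨le_refl _, hzF.le⟩) (hDS 0 ⟨le_refl _, hzF.le⟩)
  have hΓ2 : Γ ^ 2 = k ^ 2 * S := by
    rw [hΓ, mul_pow, Real.sq_sqrt hS0]
  have hkey : C₁ * (2 * m) = k ^ 2 * S := by
    rw [hC₁, div_mul_cancel₀ _ (by positivity : (2 * m) ≠ 0), hΓ2]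
  -- continuity and integrability
  have hvc : ContinuousOn v (Set.Icc 0 zF) := fun t ht =>
    (hv t ht).continuousAt.continuousWithinAt
  have hI1int : IntervalIntegrable (fun t => (v t) ^ 2) volume 0 zF := by
    apply ContinuousOn.intervalIntegrable; rw [huIcc]; exact hvc.pow 2
  have hI2int : IntervalIntegrable (fun t => D t * (v' t) ^ 2) volume 0 zF := by
    apply ContinuousOn.intervalIntegrable; rw [huIcc]; exact hDcont.mul (hv'.pow 2)
  have hI4int : IntervalIntegrable (fun t => D t * v t * v' t) volume 0 zF := by
    apply ContinuousOn.intervalIntegrable; rw [huIcc]; exact (hDcont.mul hvc).mul hv'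
  have hvvint : IntervalIntegrable (fun t => v t * v' t) volume 0 zF := by
    apply ContinuousOn.intervalIntegrable; rw [huIcc]; exact hvc.mul hv'
  -- names for the integrals
  set I1 := ∫ t in (0:ℝ)..zF, (v t) ^ 2 with hI1_def
  set I2 := ∫ t in (0:ℝ)..zF, D t * (v' t) ^ 2 with hI2_def
  set I4 := ∫ t in (0:ℝ)..zF, D t * v t * v' t with hI4_def
  have hI1nn : 0 ≤ I1 :=
    intervalIntegral.integral_nonneg hzF.le (fun u _ => sq_nonneg _)
  have hI2nn : 0 ≤ I2 :=
    intervalIntegral.integral_nonneg hzF.le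
      (fun u hu => mul_nonneg (hD0 u hu) (sq_nonneg _))
  -- FTC : ∫ v v' = v(zF)²/2
  have hvv : (∫ t in (0:ℝ)..zF, v t * v' t) = v zF * v zF / 2 := by
    have h : ∀ t ∈ Set.uIcc (0:ℝ) zF, HasDerivAt (fun s => v s * v s / 2) (v t * v' t) t := by
      intro t ht
      rw [huIcc] at ht
      have h2 : HasDerivAt (fun s => v s * v s / 2) ((v' t * v t + v t * v' t) / 2) t :=
        ((hv t ht).mul (hv t ht)).div_const 2
      convert h2 using 1
      ring
    rw [intervalIntegral.integral_eq_sub_of_hasDerivAt h hvvint, hv0]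
    ring
  -- cross-term bound
  have hmono : k * I4 ≤ (m / 2) * I2 + C₁ * I1 := by
    have h1 : (∫ t in (0:ℝ)..zF, k * (D t * v t * v' t)) ≤
        ∫ t in (0:ℝ)..zF, ((m / 2) * (D t * (v' t) ^ 2) + C₁ * (v t) ^ 2) := by
      apply intervalIntegral.integral_mono_on hzF.le (hI4int.const_mul k)
        ((hI2int.const_mul (m / 2)).add (hI1int.const_mul C₁))
      intro t ht
      have hd := hD0 t ht
      have hdS := hDS t ht
      nlinarith [mul_nonneg hd (sq_nonneg (m * v' t - k * v t)),
        mul_nonneg (sq_nonneg (k * v t)) (sub_nonneg.2 hdS), hm, hk,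
        sq_nonneg (v t), sq_nonneg (v' t)]
    rw [intervalIntegral.integral_const_mul] at h1
    rwa [intervalIntegral.integral_add (hI2int.const_mul (m / 2)) (hI1int.const_mul C₁),
      intervalIntegral.integral_const_mul, intervalIntegral.integral_const_mul] at h1
  -- rewrite the bilinear form integrands
  have e1 : (∫ t in (0:ℝ)..zF, v t * v t) = I1 := by
    rw [hI1_def]; congr 1; ext t; ring
  have e2 : (∫ t in (0:ℝ)..zF, D t * v' t * v' t) = I2 := by
    rw [hI2_def]; congr 1; ext t; ring
  have hnA : (normAlpha zF D v v') ^ 2 = I2 + I1 :=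
    Real.sq_sqrt (by positivity)
  have hnL : (normL2 zF v) ^ 2 = I1 := Real.sq_sqrt hI1nn
  rw [ge_iff_le, Abil, e1, e2, hvv, hnA, hnL, hC₀, ← hk_def, ← hI4_def]
  nlinarith [mul_nonneg (sub_nonneg.2 (min_le_left (Gc / f) (1 / f))) hI1nn,
    mul_nonneg (sub_nonneg.2 (min_le_right (Gc / f) (1 / f))) hI2nn,
    mul_nonneg hFc.le (mul_self_nonneg (v zF)), hmono, hm, hI1nn, hI2nn]
end

section
/- Let z_F > 0, let D : ℝ → ℝ be continuous on [0,z_F] with D(z) > 0 for all z ∈ [0,z_F) and with 1/D integrable on (0,z_F), set I(D) = (∫₀^{z_F} 1/D(z) dz)^{1/2}, let f, 𝒢, ℱ, M_α > 0 be real constants, and let C = 𝒢/f + 1/f + ℱ·(1/√z_F + 2·I(D))² + ℱ·(1/√z_F + 2·I(D))·I(D) + (M_α/f)·(sup_{z∈[0,z_F]} D(z))^{1/2}. For real numbers r and r', define F(φ) = −r'·∫₀^{z_F} φ(z) dz − 𝒜(r·𝟙, φ), where r·𝟙 denotes the constant function with value r. Then for every continuously differentiable φ on [0,z_F], |F(φ)|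 ≤ √z_F·(|r'| + C·|r|)·‖φ‖_α. -/
open MeasureTheory

/-- `F(φ) = −r'·∫₀^{z_F} φ − 𝒜(r·𝟙, φ)`, where the constant function `r·𝟙` has
derivative `0`. -/
noncomputable def Ffun (zF f Gc Fc Ma : ℝ) (D : ℝ → ℝ) (r r' : ℝ) (φ φ' : ℝ → ℝ) : ℝ :=
  -r' * (∫ t in (0:ℝ)..zF, φ t)
    - Abil zF f Gc Fc Ma D (fun _ => r) (fun _ => 0) φ φ'

lemma my_cs {α : Type*} [MeasurableSpace α] (μ : Measure α) (f g : α → ℝ)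
    (hf : Integrable (fun x => f x ^ 2) μ) (hg : Integrable (fun x => g x ^ 2) μ)
    (hfg : Integrable (fun x => f x * g x) μ) :
    (∫ x, f x * g x ∂μ) ^ 2 ≤ (∫ x, f x ^ 2 ∂μ) * (∫ x, g x ^ 2 ∂μ) := by
  have key : ∀ t : ℝ, 0 ≤ (∫ x, f x ^ 2 ∂μ) * (t * t) + (2 * ∫ x, f x * g x ∂μ) * t
      + (∫ x, g x ^ 2 ∂μ) := by
    intro t
    have h1 : (fun x => (t * f x + g x) ^ 2)
        = fun x => t ^ 2 * f x ^ 2 + (2 * t * (f x * g x) + g x ^ 2) := by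
      funext x; ring
    have i2 : Integrable (fun x => 2 * t * (f x * g x) + g x ^ 2) μ :=
      (hfg.const_mul _).add hg
    have h3 : (0:ℝ) ≤ ∫ x, (t * f x + g x) ^ 2 ∂μ :=
      integral_nonneg fun x => sq_nonneg _
    rw [h1, integral_add (hf.const_mul _) i2, integral_add (hfg.const_mul _) hg,
      integral_const_mul, integral_const_mul] at h3
    nlinarith [h3]
  have hd := discrim_le_zero key
  rw [discrim] at hd
  nlinarith [hd]

lemma abs_le_sqrt_mul_sqrt {X P Q : ℝ} (h : X ^ 2 ≤ P * Q) (hP : 0 ≤ P) :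
    |X| ≤ Real.sqrt P * Real.sqrt Q := by
  rw [← Real.sqrt_sq_eq_abs, ← Real.sqrt_mul hP]
  exact Real.sqrt_le_sqrt h

lemma hD_nonneg (zF : ℝ) (hzF : 0 < zF) (D : ℝ → ℝ)
    (hDcont : ContinuousOn D (Set.Icc 0 zF))
    (hDpos : ∀ z ∈ Set.Ico 0 zF, 0 < D z) :
    ∀ z ∈ Set.Icc 0 zF, 0 ≤ D z := by
  intro z hz
  rcases lt_or_eq_of_le hz.2 with h | h
  · exact (hDpos z ⟨hz.1, h⟩).le
  · subst h
    have hmem : z ∈ closure (Set.Ico 0 z) := by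
      rw [closure_Ico hzF.ne]; exact ⟨hzF.le, le_refl _⟩
    haveI : (nhdsWithin z (Set.Ico 0 z)).NeBot :=
      mem_closure_iff_nhdsWithin_neBot.mp hmem
    have ht : Filter.Tendsto D (nhdsWithin z (Set.Ico 0 z)) (nhds (D z)) :=
      (hDcont z ⟨hzF.le, le_refl _⟩).mono Set.Ico_subset_Icc_self
    exact ge_of_tendsto ht
      (Filter.eventually_of_mem self_mem_nhdsWithin fun x hx => (hDpos x hx).le)

lemma seg_bound (zF : ℝ) (hzF : 0 < zF) (D : ℝ → ℝ)
    (hDcont : ContinuousOn D (Set.Icc 0 zF))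
    (hDpos : ∀ z ∈ Set.Ico 0 zF, 0 < D z)
    (hDint : IntervalIntegrable (fun z => 1 / D z) volume 0 zF)
    (φ' : ℝ → ℝ) (hφ' : ContinuousOn φ' (Set.Icc 0 zF))
    (a : ℝ) (ha : a ∈ Set.Icc 0 zF) :
    |∫ t in a..zF, φ' t| ≤
      IofD zF D * Real.sqrt (∫ t in (0:ℝ)..zF, D t * φ' t ^ 2) := by
  have hsub : Set.Ioo a zF ⊆ Set.Ioo 0 zF := Set.Ioo_subset_Ioo ha.1 le_rfl
  have hsubIcc : Set.Ioo a zF ⊆ Set.Icc 0 zF := fun x hx =>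
    ⟨le_of_lt (lt_of_le_of_lt ha.1 hx.1), hx.2.le⟩
  have hIccsub : Set.Ioo 0 zF ⊆ Set.Icc 0 zF := Set.Ioo_subset_Icc_self
  have hDposIoo : ∀ x ∈ Set.Ioo a zF, 0 < D x := fun x hx =>
    hDpos x ⟨le_of_lt (lt_of_le_of_lt ha.1 hx.1), hx.2⟩
  -- integrability of 1/D on Ioo 0 zF
  have hP : IntegrableOn (fun x => 1 / D x) (Set.Ioo 0 zF) volume :=
    ((intervalIntegrable_iff_integrableOn_Ioc_of_le hzF.le).mp hDint).mono_set
      Set.Ioo_subset_Ioc_self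
  -- integrability of D φ'² on Icc 0 zF
  have hQI : IntegrableOn (fun x => D x * φ' x ^ 2) (Set.Icc 0 zF) volume :=
    (hDcont.mul (hφ'.pow 2)).integrableOn_Icc
  set f : ℝ → ℝ := fun x => Real.sqrt (1 / D x) with hf
  set g : ℝ → ℝ := fun x => Real.sqrt (D x) * φ' x with hg
  have hfg_eq : Set.EqOn (fun x => f x * g x) φ' (Set.Ioo a zF) := by
    intro x hx
    have hDx := hDposIoo x hx
    simp only [f, g]
    rw [← mul_assoc, ← Real.sqrt_mul (by positivity), one_div,
      inv_mul_cancel₀ hDx.ne', Real.sqrt_one, one_mul]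
  have hf2_eq : Set.EqOn (fun x => f x ^ 2) (fun x => 1 / D x) (Set.Ioo a zF) := by
    intro x hx
    have hDx := hDposIoo x hx
    simp only [f]
    rw [Real.sq_sqrt (by positivity)]
  have hg2_eq : Set.EqOn (fun x => g x ^ 2) (fun x => D x * φ' x ^ 2) (Set.Ioo a zF) := by
    intro x hx
    have hDx := hDposIoo x hx
    simp only [g, mul_pow]
    rw [Real.sq_sqrt hDx.le]
  have hf2 : IntegrableOn (fun x => f x ^ 2) (Set.Ioo a zF) volume :=
    ((hP.mono_set hsub).congr_fun hf2_eq.symm measurableSet_Ioo)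
  have hg2 : IntegrableOn (fun x => g x ^ 2) (Set.Ioo a zF) volume :=
    ((hQI.mono_set hsubIcc).congr_fun hg2_eq.symm measurableSet_Ioo)
  have hφ'int : IntegrableOn φ' (Set.Ioo a zF) volume :=
    (hφ'.integrableOn_Icc).mono_set hsubIcc
  have hfgint : IntegrableOn (fun x => f x * g x) (Set.Ioo a zF) volume :=
    hφ'int.congr_fun hfg_eq.symm measurableSet_Ioo
  have cs := my_cs (volume.restrict (Set.Ioo a zF)) f g hf2 hg2 hfgint
  rw [setIntegral_congr_fun measurableSet_Ioo hfg_eq,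
    setIntegral_congr_fun measurableSet_Ioo hf2_eq,
    setIntegral_congr_fun measurableSet_Ioo hg2_eq] at cs
  -- nonnegativity on the sets
  have h1Dnn : ∀ x ∈ Set.Ioo 0 zF, (0:ℝ) ≤ 1 / D x := fun x hx =>
    (one_div_pos.mpr (hDpos x ⟨hx.1.le, hx.2⟩)).le
  have hQnn : ∀ x ∈ Set.Ioo 0 zF, (0:ℝ) ≤ D x * φ' x ^ 2 := fun x hx =>
    mul_nonneg (hDpos x ⟨hx.1.le, hx.2⟩).le (sq_nonneg _)
  -- monotonicity to the full interval
  have hPmono : ∫ x in Set.Ioo a zF, 1 / D x ≤ ∫ x in Set.Ioo 0 zF, 1 / D x := by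
    refine setIntegral_mono_set hP ?_ (HasSubset.Subset.eventuallyLE hsub)
    exact (ae_restrict_iff' measurableSet_Ioo).mpr (Filter.Eventually.of_forall h1Dnn)
  have hQmono : ∫ x in Set.Ioo a zF, D x * φ' x ^ 2
      ≤ ∫ x in Set.Ioo 0 zF, D x * φ' x ^ 2 := by
    refine setIntegral_mono_set (hQI.mono_set hIccsub) ?_
      (HasSubset.Subset.eventuallyLE hsub)
    exact (ae_restrict_iff' measurableSet_Ioo).mpr (Filter.Eventually.of_forall hQnn)
  have hP0 : (0:ℝ) ≤ ∫ x in Set.Ioo 0 zF, 1 / D x :=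
    setIntegral_nonneg measurableSet_Ioo h1Dnn
  have hPa0 : (0:ℝ) ≤ ∫ x in Set.Ioo a zF, 1 / D x :=
    setIntegral_nonneg measurableSet_Ioo fun x hx => h1Dnn x (hsub hx)
  have hQa0 : (0:ℝ) ≤ ∫ x in Set.Ioo a zF, D x * φ' x ^ 2 :=
    setIntegral_nonneg measurableSet_Ioo fun x hx => hQnn x (hsub hx)
  -- conversions between interval and set integrals
  have eφ : ∫ t in a..zF, φ' t = ∫ x in Set.Ioo a zF, φ' x := by
    rw [intervalIntegral.integral_of_le ha.2, integral_Ioc_eq_integral_Ioo]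
  have eP : ∫ t in (0:ℝ)..zF, 1 / D t = ∫ x in Set.Ioo 0 zF, 1 / D x := by
    rw [intervalIntegral.integral_of_le hzF.le, integral_Ioc_eq_integral_Ioo]
  have eQ : ∫ t in (0:ℝ)..zF, D t * φ' t ^ 2
      = ∫ x in Set.Ioo 0 zF, D x * φ' x ^ 2 := by
    rw [intervalIntegral.integral_of_le hzF.le, integral_Ioc_eq_integral_Ioo]
  have hmain : (∫ t in a..zF, φ' t) ^ 2
      ≤ (∫ t in (0:ℝ)..zF, 1 / D t) * ∫ t in (0:ℝ)..zF, D t * φ' t ^ 2 := by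
    rw [eφ, eP, eQ]
    calc (∫ x in Set.Ioo a zF, φ' x) ^ 2
        ≤ (∫ x in Set.Ioo a zF, 1 / D x) * ∫ x in Set.Ioo a zF, D x * φ' x ^ 2 := cs
      _ ≤ (∫ x in Set.Ioo 0 zF, 1 / D x) * ∫ x in Set.Ioo 0 zF, D x * φ' x ^ 2 :=
          mul_le_mul hPmono hQmono hQa0 hP0
  rw [IofD]
  exact abs_le_sqrt_mul_sqrt hmain (eP ▸ hP0)

lemma int_abs_le (zF : ℝ) (hzF : 0 < zF) (ψ : ℝ → ℝ)
    (hψ : ContinuousOn ψ (Set.Icc 0 zF)) :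
    |∫ t in (0:ℝ)..zF, ψ t| ≤
      Real.sqrt zF * Real.sqrt (∫ t in (0:ℝ)..zF, ψ t ^ 2) := by
  have hψint : IntegrableOn ψ (Set.Ioc 0 zF) volume :=
    (hψ.integrableOn_Icc).mono_set Set.Ioc_subset_Icc_self
  have hψ2int : IntegrableOn (fun x => ψ x ^ 2) (Set.Ioc 0 zF) volume :=
    ((hψ.pow 2).integrableOn_Icc).mono_set Set.Ioc_subset_Icc_self
  have hconst : IntegrableOn (fun _ => (1:ℝ)) (Set.Ioc 0 zF) volume :=
    integrableOn_const measure_Ioc_lt_top.ne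
  have hconst2 : IntegrableOn (fun x => ((fun _ => (1:ℝ)) x) ^ 2) (Set.Ioc 0 zF) volume := by
    simpa using hconst
  have hfg : IntegrableOn (fun x => (1:ℝ) * ψ x) (Set.Ioc 0 zF) volume := by
    simpa using hψint
  have cs := my_cs (volume.restrict (Set.Ioc 0 zF)) (fun _ => (1:ℝ)) ψ hconst2 hψ2int hfg
  simp only [one_mul, one_pow] at cs
  have hone : ∫ _x in Set.Ioc (0:ℝ) zF, (1:ℝ) = zF := by
    rw [setIntegral_const, Real.volume_real_Ioc_of_le hzF.le, smul_eq_mul, sub_zero,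
      mul_one]
  rw [hone] at cs
  have e1 : ∫ t in (0:ℝ)..zF, ψ t = ∫ x in Set.Ioc 0 zF, ψ x :=
    intervalIntegral.integral_of_le hzF.le
  have e2 : ∫ t in (0:ℝ)..zF, ψ t ^ 2 = ∫ x in Set.Ioc 0 zF, ψ x ^ 2 :=
    intervalIntegral.integral_of_le hzF.le
  rw [e1, e2]
  exact abs_le_sqrt_mul_sqrt cs hzF.le

lemma intD_bound (zF : ℝ) (hzF : 0 < zF) (D : ℝ → ℝ)
    (hDcont : ContinuousOn D (Set.Icc 0 zF))
    (hDpos : ∀ z ∈ Set.Ico 0 zF, 0 < D z)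
    (φ' : ℝ → ℝ) (hφ' : ContinuousOn φ' (Set.Icc 0 zF)) :
    |∫ t in (0:ℝ)..zF, D t * φ' t| ≤
      Real.sqrt zF * Real.sqrt (sSup (D '' Set.Icc 0 zF)) *
        Real.sqrt (∫ t in (0:ℝ)..zF, D t * φ' t ^ 2) := by
  have hD0 := hD_nonneg zF hzF D hDcont hDpos
  have hsubIcc : Set.Ioc (0:ℝ) zF ⊆ Set.Icc 0 zF := Set.Ioc_subset_Icc_self
  set S := sSup (D '' Set.Icc 0 zF) with hS
  have hbdd : BddAbove (D '' Set.Icc 0 zF) :=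
    (isCompact_Icc.image_of_continuousOn hDcont).bddAbove
  have hDleS : ∀ x ∈ Set.Icc (0:ℝ) zF, D x ≤ S := fun x hx =>
    le_csSup hbdd ⟨x, hx, rfl⟩
  have hS0 : 0 ≤ S := le_trans (hD0 0 ⟨le_refl _, hzF.le⟩)
    (hDleS 0 ⟨le_refl _, hzF.le⟩)
  have hDint : IntegrableOn D (Set.Ioc 0 zF) volume :=
    (hDcont.integrableOn_Icc).mono_set hsubIcc
  have hQint : IntegrableOn (fun x => D x * φ' x ^ 2) (Set.Ioc 0 zF) volume :=
    ((hDcont.mul (hφ'.pow 2)).integrableOn_Icc).mono_set hsubIcc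
  have hDφ'int : IntegrableOn (fun x => D x * φ' x) (Set.Ioc 0 zF) volume :=
    ((hDcont.mul hφ').integrableOn_Icc).mono_set hsubIcc
  set f : ℝ → ℝ := fun x => Real.sqrt (D x) with hf
  set g : ℝ → ℝ := fun x => Real.sqrt (D x) * φ' x with hg
  have hfg_eq : Set.EqOn (fun x => f x * g x) (fun x => D x * φ' x) (Set.Ioc 0 zF) := by
    intro x hx
    simp only [f, g]
    rw [← mul_assoc, Real.mul_self_sqrt (hD0 x (hsubIcc hx))]
  have hf2_eq : Set.EqOn (fun x => f x ^ 2) D (Set.Ioc 0 zF) := by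
    intro x hx
    simp only [f]
    rw [Real.sq_sqrt (hD0 x (hsubIcc hx))]
  have hg2_eq : Set.EqOn (fun x => g x ^ 2) (fun x => D x * φ' x ^ 2) (Set.Ioc 0 zF) := by
    intro x hx
    simp only [g, mul_pow]
    rw [Real.sq_sqrt (hD0 x (hsubIcc hx))]
  have hf2 : IntegrableOn (fun x => f x ^ 2) (Set.Ioc 0 zF) volume :=
    hDint.congr_fun hf2_eq.symm measurableSet_Ioc
  have hg2 : IntegrableOn (fun x => g x ^ 2) (Set.Ioc 0 zF) volume :=
    hQint.congr_fun hg2_eq.symm measurableSet_Ioc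
  have hfgint : IntegrableOn (fun x => f x * g x) (Set.Ioc 0 zF) volume :=
    hDφ'int.congr_fun hfg_eq.symm measurableSet_Ioc
  have cs := my_cs (volume.restrict (Set.Ioc 0 zF)) f g hf2 hg2 hfgint
  rw [setIntegral_congr_fun measurableSet_Ioc hfg_eq,
    setIntegral_congr_fun measurableSet_Ioc hf2_eq,
    setIntegral_congr_fun measurableSet_Ioc hg2_eq] at cs
  have hDle : ∫ x in Set.Ioc (0:ℝ) zF, D x ≤ zF * S := by
    have h1 : ∫ x in Set.Ioc (0:ℝ) zF, D x ≤ ∫ _x in Set.Ioc (0:ℝ) zF, S :=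
      setIntegral_mono_on hDint (integrableOn_const measure_Ioc_lt_top.ne)
        measurableSet_Ioc (fun x hx => hDleS x (hsubIcc hx))
    have h2 : ∫ _x in Set.Ioc (0:ℝ) zF, S = zF * S := by
      rw [setIntegral_const, Real.volume_real_Ioc_of_le hzF.le, smul_eq_mul, sub_zero]
    linarith
  have hQ0 : (0:ℝ) ≤ ∫ x in Set.Ioc 0 zF, D x * φ' x ^ 2 :=
    setIntegral_nonneg measurableSet_Ioc fun x hx =>
      mul_nonneg (hD0 x (hsubIcc hx)) (sq_nonneg _)
  have e1 : ∫ t in (0:ℝ)..zF, D t * φ' t = ∫ x in Set.Ioc 0 zF, D x * φ' x :=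
    intervalIntegral.integral_of_le hzF.le
  have e2 : ∫ t in (0:ℝ)..zF, D t * φ' t ^ 2 = ∫ x in Set.Ioc 0 zF, D x * φ' x ^ 2 :=
    intervalIntegral.integral_of_le hzF.le
  rw [e1, e2]
  have hmain : (∫ x in Set.Ioc 0 zF, D x * φ' x) ^ 2
      ≤ (zF * S) * ∫ x in Set.Ioc 0 zF, D x * φ' x ^ 2 :=
    le_trans cs (mul_le_mul_of_nonneg_right hDle hQ0)
  have := abs_le_sqrt_mul_sqrt hmain (mul_nonneg hzF.le hS0)
  rwa [Real.sqrt_mul hzF.le] at this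

lemma trace_bound (zF : ℝ) (hzF : 0 < zF) (D : ℝ → ℝ)
    (hDcont : ContinuousOn D (Set.Icc 0 zF))
    (hDpos : ∀ z ∈ Set.Ico 0 zF, 0 < D z)
    (hDint : IntervalIntegrable (fun z => 1 / D z) volume 0 zF)
    (φ φ' : ℝ → ℝ)
    (hφ : ∀ z ∈ Set.Icc 0 zF, HasDerivAt φ (φ' z) z)
    (hφ' : ContinuousOn φ' (Set.Icc 0 zF)) :
    |φ zF| ≤ (1 / Real.sqrt zF) * Real.sqrt (∫ t in (0:ℝ)..zF, φ t ^ 2)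
      + IofD zF D * Real.sqrt (∫ t in (0:ℝ)..zF, D t * φ' t ^ 2) := by
  set s := Real.sqrt zF with hs
  have hs0 : 0 < s := Real.sqrt_pos.mpr hzF
  have hss : s * s = zF := Real.mul_self_sqrt hzF.le
  set B := ∫ t in (0:ℝ)..zF, φ t ^ 2 with hB
  set Q := ∫ t in (0:ℝ)..zF, D t * φ' t ^ 2 with hQ
  have hφc : ContinuousOn φ (Set.Icc 0 zF) := fun z hz =>
    (hφ z hz).continuousAt.continuousWithinAt
  have hkey : ∀ t ∈ Set.Icc (0:ℝ) zF, φ zF - φ t = ∫ x in t..zF, φ' x := by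
    intro t ht
    have husub : Set.uIcc t zF ⊆ Set.Icc 0 zF := by
      rw [Set.uIcc_of_le ht.2]; exact Set.Icc_subset_Icc ht.1 le_rfl
    exact (intervalIntegral.integral_eq_sub_of_hasDerivAt
      (fun x hx => hφ x (husub hx)) ((hφ'.mono husub).intervalIntegrable)).symm
  have hbound : ∀ t ∈ Set.uIoc (0:ℝ) zF, ‖φ zF - φ t‖ ≤ IofD zF D * Real.sqrt Q := by
    intro t ht
    rw [Set.uIoc_of_le hzF.le] at ht
    have ht' : t ∈ Set.Icc (0:ℝ) zF := ⟨ht.1.le, ht.2⟩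
    rw [hkey t ht', Real.norm_eq_abs]
    exact seg_bound zF hzF D hDcont hDpos hDint φ' hφ' t ht'
  have h2 : ‖∫ t in (0:ℝ)..zF, (φ zF - φ t)‖ ≤ (IofD zF D * Real.sqrt Q) * |zF - 0| :=
    intervalIntegral.norm_integral_le_of_norm_le_const hbound
  rw [Real.norm_eq_abs, sub_zero, abs_of_pos hzF] at h2
  have huicc : Set.uIcc (0:ℝ) zF = Set.Icc 0 zF := Set.uIcc_of_le hzF.le
  have hφint : IntervalIntegrable φ volume 0 zF :=
    (huicc ▸ hφc : ContinuousOn φ (Set.uIcc 0 zF)).intervalIntegrable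
  have hconst : IntervalIntegrable (fun _ => φ zF) volume 0 zF := intervalIntegrable_const
  have hsplit : zF * φ zF = (∫ t in (0:ℝ)..zF, φ t) + ∫ t in (0:ℝ)..zF, (φ zF - φ t) := by
    rw [← intervalIntegral.integral_add hφint (hconst.sub hφint)]
    have he : (fun t => φ t + (φ zF - φ t)) = fun _ => φ zF := by funext t; ring
    rw [he, intervalIntegral.integral_const, smul_eq_mul, sub_zero]
  have h1 : |∫ t in (0:ℝ)..zF, φ t| ≤ s * Real.sqrt B := int_abs_le zF hzF φ hφc
  have hmain : zF * |φ zF| ≤ s * Real.sqrt B + IofD zF D * Real.sqrt Q * zF := by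
    have := abs_add_le (∫ t in (0:ℝ)..zF, φ t) (∫ t in (0:ℝ)..zF, (φ zF - φ t))
    rw [← hsplit, abs_mul, abs_of_pos hzF] at this
    linarith
  have heq : zF * ((1 / s) * Real.sqrt B + IofD zF D * Real.sqrt Q)
      = s * Real.sqrt B + IofD zF D * Real.sqrt Q * zF := by
    rw [← hss]; field_simp
  have : zF * |φ zF| ≤ zF * ((1 / s) * Real.sqrt B + IofD zF D * Real.sqrt Q) := by
    rw [heq]; exact hmain
  exact le_of_mul_le_mul_left this hzF
set_option maxHeartbeats 1000000 in
theorem stmt_4 (zF : ℝ) (hzF : 0 < zF) (D : ℝ → ℝ)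
    (hDcont : ContinuousOn D (Set.Icc 0 zF))
    (hDpos : ∀ z ∈ Set.Ico 0 zF, 0 < D z)
    (hDint : IntervalIntegrable (fun z => 1 / D z) volume 0 zF)
    (f Gc Fc Ma : ℝ) (hf : 0 < f) (hGc : 0 < Gc) (hFc : 0 < Fc) (hMa : 0 < Ma)
    (C : ℝ)
    (hC : C = Gc / f + 1 / f + Fc * (1 / Real.sqrt zF + 2 * IofD zF D) ^ 2
        + Fc * (1 / Real.sqrt zF + 2 * IofD zF D) * IofD zF D
        + (Ma / f) * Real.sqrt (sSup (D '' Set.Icc 0 zF)))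
    (r r' : ℝ)
    (φ φ' : ℝ → ℝ)
    (hφ : ∀ z ∈ Set.Icc 0 zF, HasDerivAt φ (φ' z) z)
    (hφ' : ContinuousOn φ' (Set.Icc 0 zF)) :
    |Ffun zF f Gc Fc Ma D r r' φ φ'| ≤
      Real.sqrt zF * (|r'| + C * |r|) * normAlpha zF D φ φ' := by
  set s := Real.sqrt zF with hs
  set I := IofD zF D with hI
  set SS := Real.sqrt (sSup (D '' Set.Icc 0 zF)) with hSS
  set N := normAlpha zF D φ φ' with hNdef
  set Q := ∫ t in (0:ℝ)..zF, D t * φ' t ^ 2 with hQ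
  set B := ∫ t in (0:ℝ)..zF, φ t ^ 2 with hB
  set Iφ := ∫ t in (0:ℝ)..zF, φ t with hIφ
  set Iφ' := ∫ t in (0:ℝ)..zF, φ' t with hIφ'
  set IDφ' := ∫ t in (0:ℝ)..zF, D t * φ' t with hIDφ'
  have hs0 : 0 < s := Real.sqrt_pos.mpr hzF
  have hI0 : 0 ≤ I := Real.sqrt_nonneg _
  have hSS0 : 0 ≤ SS := Real.sqrt_nonneg _
  have hD0 := hD_nonneg zF hzF D hDcont hDpos
  have hφc : ContinuousOn φ (Set.Icc 0 zF) := fun z hz =>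
    (hφ z hz).continuousAt.continuousWithinAt
  have hQ0 : (0:ℝ) ≤ Q :=
    intervalIntegral.integral_nonneg hzF.le fun t ht =>
      mul_nonneg (hD0 t ht) (sq_nonneg _)
  have hB0 : (0:ℝ) ≤ B :=
    intervalIntegral.integral_nonneg hzF.le fun t _ => sq_nonneg _
  have hNQ : Real.sqrt Q ≤ N := by
    rw [hNdef]; exact Real.sqrt_le_sqrt (le_add_of_nonneg_right hB0)
  have hNB : Real.sqrt B ≤ N := by
    rw [hNdef]; exact Real.sqrt_le_sqrt (le_add_of_nonneg_left hQ0)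
  have hN0 : 0 ≤ N := Real.sqrt_nonneg _
  -- the four basic bounds
  have b1 : |Iφ| ≤ s * N :=
    le_trans (int_abs_le zF hzF φ hφc)
      (mul_le_mul_of_nonneg_left hNB hs0.le)
  have b2 : |φ zF| ≤ (1 / s) * N + I * N := by
    refine le_trans (trace_bound zF hzF D hDcont hDpos hDint φ φ' hφ hφ') ?_
    have h1 : (1 / s) * Real.sqrt B ≤ (1 / s) * N :=
      mul_le_mul_of_nonneg_left hNB (by positivity)
    have h2 : I * Real.sqrt Q ≤ I * N := mul_le_mul_of_nonneg_left hNQ hI0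
    linarith
  have b3 : |Iφ'| ≤ I * N :=
    le_trans (seg_bound zF hzF D hDcont hDpos hDint φ' hφ' 0 ⟨le_refl _, hzF.le⟩)
      (mul_le_mul_of_nonneg_left hNQ hI0)
  have b4 : |IDφ'| ≤ s * SS * N :=
    le_trans (intD_bound zF hzF D hDcont hDpos φ' hφ')
      (mul_le_mul_of_nonneg_left hNQ (by positivity))
  -- rewrite Ffun
  have e1 : ∫ t in (0:ℝ)..zF, r * φ t = r * Iφ := intervalIntegral.integral_const_mul r φ
  have e2 : ∫ t in (0:ℝ)..zF, D t * (0:ℝ) * φ' t = 0 := by simp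
  have e3 : ∫ t in (0:ℝ)..zF, r * φ' t = r * Iφ' := intervalIntegral.integral_const_mul r φ'
  have e4 : ∫ t in (0:ℝ)..zF, D t * r * φ' t = r * IDφ' := by
    rw [intervalIntegral.integral_congr
      (g := fun t => r * (D t * φ' t)) (fun t _ => by ring)]
    exact intervalIntegral.integral_const_mul r _
  have hF : Ffun zF f Gc Fc Ma D r r' φ φ'
      = -(r' * Iφ) + -((Gc / f) * r * Iφ) + -(Fc * r * φ zF)
        + Fc * r * Iφ' + (Ma / f) * r * IDφ' := by
    simp only [Ffun, Abil]
    rw [e1, e2, e3, e4]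
    ring
  have htri : |Ffun zF f Gc Fc Ma D r r' φ φ'|
      ≤ |r'| * |Iφ| + (Gc / f) * |r| * |Iφ| + Fc * |r| * |φ zF|
        + Fc * |r| * |Iφ'| + (Ma / f) * |r| * |IDφ'| := by
    rw [hF]
    have t1 := abs_add_le (-(r' * Iφ) + -((Gc / f) * r * Iφ) + -(Fc * r * φ zF) + Fc * r * Iφ')
      ((Ma / f) * r * IDφ')
    have t2 := abs_add_le (-(r' * Iφ) + -((Gc / f) * r * Iφ) + -(Fc * r * φ zF)) (Fc * r * Iφ')
    have t3 := abs_add_le (-(r' * Iφ) + -((Gc / f) * r * Iφ)) (-(Fc * r * φ zF))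
    have t4 := abs_add_le (-(r' * Iφ)) (-((Gc / f) * r * Iφ))
    have a1 : |(-(r' * Iφ))| = |r'| * |Iφ| := by rw [abs_neg, abs_mul]
    have a2 : |(-((Gc / f) * r * Iφ))| = (Gc / f) * |r| * |Iφ| := by
      rw [abs_neg, abs_mul, abs_mul, abs_of_pos (div_pos hGc hf)]
    have a3 : |(-(Fc * r * φ zF))| = Fc * |r| * |φ zF| := by
      rw [abs_neg, abs_mul, abs_mul, abs_of_pos hFc]
    have a4 : |Fc * r * Iφ'| = Fc * |r| * |Iφ'| := by
      rw [abs_mul, abs_mul, abs_of_pos hFc]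
    have a5 : |(Ma / f) * r * IDφ'| = (Ma / f) * |r| * |IDφ'| := by
      rw [abs_mul, abs_mul, abs_of_pos (div_pos hMa hf)]
    linarith [t1, t2, t3, t4, a1.le, a1.ge, a2.le, a2.ge, a3.le, a3.ge, a4.le, a4.ge,
      a5.le, a5.ge]
  -- the coefficient inequality
  have hK : (Gc / f) * s + Fc * (1 / s) + 2 * Fc * I + (Ma / f) * (s * SS) ≤ s * C := by
    rw [hC]
    have hsu : s * (1 / s) = 1 := mul_one_div_cancel hs0.ne'
    have e5 : s * ((1 / s + 2 * I) ^ 2) = (1 / s) + 4 * I + 4 * s * I ^ 2 := by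
      have h : s * ((1 / s + 2 * I) ^ 2)
          = (s * (1 / s)) * (1 / s) + 4 * (s * (1 / s)) * I + 4 * s * I ^ 2 := by ring
      rw [h, hsu]; ring
    have e6 : s * ((1 / s + 2 * I) * I) = I + 2 * s * I ^ 2 := by
      have h : s * ((1 / s + 2 * I) * I) = (s * (1 / s)) * I + 2 * s * I ^ 2 := by ring
      rw [h, hsu]; ring
    have hexp : s * (Gc / f + 1 / f + Fc * (1 / s + 2 * I) ^ 2
        + Fc * (1 / s + 2 * I) * I + (Ma / f) * SS)
        = s * (Gc / f) + s * (1 / f) + Fc * (s * ((1 / s + 2 * I) ^ 2))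
          + Fc * (s * ((1 / s + 2 * I) * I)) + (Ma / f) * (s * SS) := by ring
    rw [hexp, e5, e6]
    nlinarith [mul_nonneg hFc.le hI0, mul_nonneg (mul_nonneg hFc.le hs0.le) (sq_nonneg I),
      mul_pos hs0 (div_pos (by norm_num : (0:ℝ) < 1) hf)]
  -- assemble
  have hr0 : (0:ℝ) ≤ |r| := abs_nonneg r
  have hr'0 : (0:ℝ) ≤ |r'| := abs_nonneg r'
  calc |Ffun zF f Gc Fc Ma D r r' φ φ'|
      ≤ |r'| * |Iφ| + (Gc / f) * |r| * |Iφ| + Fc * |r| * |φ zF|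
        + Fc * |r| * |Iφ'| + (Ma / f) * |r| * |IDφ'| := htri
    _ ≤ |r'| * (s * N) + (Gc / f) * |r| * (s * N) + Fc * |r| * ((1 / s) * N + I * N)
        + Fc * |r| * (I * N) + (Ma / f) * |r| * (s * SS * N) := by
        gcongr <;> positivity
    _ = |r'| * s * N + (|r| * N) *
          ((Gc / f) * s + Fc * (1 / s) + 2 * Fc * I + (Ma / f) * (s * SS)) := by ring
    _ ≤ |r'| * s * N + (|r| * N) * (s * C) := by
        have := mul_le_mul_of_nonneg_left hK (mul_nonneg hr0 hN0)
        linarith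
    _ = s * (|r'| + C * |r|) * N := by ring
end

section
/- Let m ≥ 1, n = m+1, and let D ∈ ℝⁿ have entries D_1,…,D_n. Let A(D) ∈ ℝ^{m×m} be the tridiagonal matrix with A(D)_{ii} = (D_i − D_{i+2})/4 for 1 ≤ i ≤ m−1, A(D)_{mm} = (D_m + D_{m+1})/4, A(D)_{i,i+1} = (D_{i+1} + D_{i+2})/4 and A(D)_{i+1,i} = −(D_{i+1} + D_{i+2})/4 for 1 ≤ i ≤ m−1, and all other entries zero. Then for every v ∈ ℝ^m, 4·vᵀA(D)v = Σ_{i=1}^{m−1}(D_i − D_{i+2})·v_i² + (D_m + D_{m+1})·v_m². Consequently, if D_i > 0 for all 1 ≤ i ≤ n and D_i > D_{i+2} for all 1 ≤ i ≤ n−2, then vᵀA(D)v > 0 for every nonzero v ∈ ℝ^m. -/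
open Matrix Finset

/-- 1-based access to the entries of a finite vector, with value `0` at index `0`
and out of range. -/
def pad1 {n : ℕ} (v : Fin n → ℝ) : ℕ → ℝ :=
  fun k => if hk : k - 1 < n then (if k = 0 then 0 else v ⟨k - 1, hk⟩) else 0

/-- The tridiagonal matrix `A(D)` (1-based mathematical indexing, entries `d 1, …`):
`A_{ii} = (D_i − D_{i+2})/4` for `i < m`, `A_{mm} = (D_m + D_{m+1})/4`,
`A_{i,i+1} = (D_{i+1} + D_{i+2})/4`, `A_{i+1,i} = −(D_{i+1} + D_{i+2})/4`. -/
noncomputable def matA (m : ℕ) (d : ℕ → ℝ) : Matrix (Fin m) (Fin m) ℝ :=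
  Matrix.of fun i j =>
    if i = j then
      (if i.val + 1 = m then (d m + d (m + 1)) / 4
       else (d (i.val + 1) - d (i.val + 3)) / 4)
    else if i.val + 1 = j.val then (d (i.val + 2) + d (i.val + 3)) / 4
    else if j.val + 1 = i.val then -((d (j.val + 2) + d (j.val + 3)) / 4)
    else 0

lemma pad1_val {n : ℕ} (v : Fin n → ℝ) (k : ℕ) (h1 : 1 ≤ k) (h2 : k ≤ n) :
    pad1 v k = v ⟨k - 1, by omega⟩ := by
  simp only [pad1]
  rw [dif_pos (by omega), if_neg (by omega)]

lemma matA_antisym (m : ℕ) (d : ℕ → ℝ) {i j : Fin m} (hij : i ≠ j) :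
    matA m d j i = - matA m d i j := by
  have hij' : (i : ℕ) ≠ (j : ℕ) := fun h => hij (Fin.ext h)
  simp only [matA, Matrix.of_apply, if_neg hij, if_neg (Ne.symm hij)]
  by_cases h1 : (i : ℕ) + 1 = (j : ℕ)
  · rw [if_pos h1, if_neg (by omega), if_pos h1]
  · rw [if_neg h1]
    by_cases h2 : (j : ℕ) + 1 = (i : ℕ)
    · simp [h1, h2]
    · simp [h1, h2]

lemma qf (m : ℕ) (d : ℕ → ℝ) (v : Fin m → ℝ) :
    v ⬝ᵥ (matA m d).mulVec v = ∑ i, matA m d i i * v i ^ 2 := by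
  have key : ∀ i j : Fin m,
      v i * (matA m d i j * v j) + v j * (matA m d j i * v i)
        = if i = j then 2 * (matA m d i i * v i ^ 2) else 0 := by
    intro i j
    by_cases h : i = j
    · subst h; rw [if_pos rfl]; ring
    · rw [if_neg h, matA_antisym m d h]; ring
  have h2 : 2 * (v ⬝ᵥ (matA m d).mulVec v) = 2 * ∑ i, matA m d i i * v i ^ 2 := by
    have e1 : v ⬝ᵥ (matA m d).mulVec v = ∑ i, ∑ j, v i * (matA m d i j * v j) := by
      simp [dotProduct, mulVec, Finset.mul_sum]
    calc 2 * (v ⬝ᵥ (matA m d).mulVec v)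
        = (∑ i, ∑ j, v i * (matA m d i j * v j))
          + ∑ j, ∑ i, v i * (matA m d i j * v j) := by
          rw [e1, Finset.sum_comm (f := fun i j => v i * (matA m d i j * v j))]; ring
      _ = ∑ i, ∑ j, (v i * (matA m d i j * v j) + v j * (matA m d j i * v i)) := by
          rw [← Finset.sum_add_distrib]
          congr 1; ext i
          rw [← Finset.sum_add_distrib]
      _ = ∑ i : Fin m, ∑ j : Fin m, if i = j then 2 * (matA m d i i * v i ^ 2) else 0 := by
          congr 1; ext i; congr 1; ext j; exact key i j
      _ = 2 * ∑ i, matA m d i i * v i ^ 2 := by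
          rw [Finset.mul_sum]
          congr 1; ext i
          simp
  linarith


lemma matA_diag (m : ℕ) (d : ℕ → ℝ) (i : Fin m) :
    matA m d i i = if i.val + 1 = m then (d m + d (m + 1)) / 4
      else (d (i.val + 1) - d (i.val + 3)) / 4 := by
  simp [matA]

lemma sq_pos_of_ne' {x : ℝ} (hx : x ≠ 0) : 0 < x ^ 2 :=
  lt_of_le_of_ne (sq_nonneg _) (Ne.symm (pow_ne_zero 2 hx))

theorem stmt_9 (m : ℕ) (hm : 1 ≤ m) (D : Fin (m + 1) → ℝ) :
    (∀ v : Fin m → ℝ,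
      4 * (v ⬝ᵥ (matA m (pad1 D)).mulVec v) =
        (∑ i ∈ Finset.Icc 1 (m - 1),
            (pad1 D i - pad1 D (i + 2)) * (pad1 v i) ^ 2)
          + (pad1 D m + pad1 D (m + 1)) * (pad1 v m) ^ 2) ∧
    ((∀ k : Fin (m + 1), 0 < D k) →
      (∀ i : ℕ, 1 ≤ i → i + 2 ≤ m + 1 → pad1 D (i + 2) < pad1 D i) →
      ∀ v : Fin m → ℝ, v ≠ 0 → 0 < v ⬝ᵥ (matA m (pad1 D)).mulVec v) := by
  have hid : ∀ v : Fin m → ℝ,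
      4 * (v ⬝ᵥ (matA m (pad1 D)).mulVec v) =
        (∑ i ∈ Finset.Icc 1 (m - 1),
            (pad1 D i - pad1 D (i + 2)) * (pad1 v i) ^ 2)
          + (pad1 D m + pad1 D (m + 1)) * (pad1 v m) ^ 2 := by
    intro v
    set F : ℕ → ℝ := fun k =>
      (if k = m then pad1 D m + pad1 D (m + 1) else pad1 D k - pad1 D (k + 2))
        * (pad1 v k) ^ 2 with hF
    have hterm : ∀ i : Fin m, 4 * (matA m (pad1 D) i i * v i ^ 2) = F (i.val + 1) := by
      intro i
      have hvv : pad1 v (i.val + 1) = v i := by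
        rw [pad1_val v (i.val + 1) (by omega) (by omega)]
        exact congrArg v (Fin.ext (by simp))
      rw [matA_diag]
      simp only [hF, hvv]
      by_cases h : i.val + 1 = m
      · rw [if_pos h, if_pos h]; ring
      · rw [if_neg h, if_neg h]
        have h3 : i.val + 1 + 2 = i.val + 3 := by omega
        rw [h3]; ring
    calc 4 * (v ⬝ᵥ (matA m (pad1 D)).mulVec v)
        = ∑ i : Fin m, 4 * (matA m (pad1 D) i i * v i ^ 2) := by
          rw [qf, Finset.mul_sum]
      _ = ∑ i : Fin m, F (i.val + 1) := Finset.sum_congr rfl fun i _ => hterm i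
      _ = ∑ k ∈ Finset.range m, F (k + 1) := by
          rw [Fin.sum_univ_eq_sum_range (fun k => F (k + 1))]
      _ = ∑ k ∈ Finset.Icc 1 m, F k := by
          rw [← Finset.Ico_add_one_right_eq_Icc, Finset.sum_Ico_eq_sum_range]
          simp [add_comm]
      _ = (∑ k ∈ Finset.Icc 1 (m - 1), F k) + F m := by
          have hme : m = (m - 1) + 1 := by omega
          rw [hme, Finset.sum_Icc_succ_top (by omega)]
          rw [← hme]
      _ = (∑ i ∈ Finset.Icc 1 (m - 1),
            (pad1 D i - pad1 D (i + 2)) * (pad1 v i) ^ 2)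
          + (pad1 D m + pad1 D (m + 1)) * (pad1 v m) ^ 2 := by
          congr 1
          · refine Finset.sum_congr rfl fun k hk => ?_
            rw [Finset.mem_Icc] at hk
            simp only [hF]
            rw [if_neg (by omega)]
          · simp only [hF, if_true, eq_self_iff_true]
  refine ⟨hid, ?_⟩
  intro hpos hmono v hv
  have hterm_nonneg : ∀ k ∈ Finset.Icc 1 (m - 1),
      0 ≤ (pad1 D k - pad1 D (k + 2)) * (pad1 v k) ^ 2 := by
    intro k hk
    rw [Finset.mem_Icc] at hk
    have h1 := hmono k hk.1 (by omega)
    have h2 := sq_nonneg (pad1 v k)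
    nlinarith
  have hcoef : 0 < pad1 D m + pad1 D (m + 1) := by
    rw [pad1_val D m hm (by omega), pad1_val D (m + 1) (by omega) le_rfl]
    have h1 := hpos ⟨m - 1, by omega⟩
    have h2 := hpos ⟨m + 1 - 1, by omega⟩
    linarith
  obtain ⟨j, hj⟩ := Function.ne_iff.mp hv
  rw [Pi.zero_apply] at hj
  have hvj : pad1 v (j.val + 1) = v j := by
    rw [pad1_val v (j.val + 1) (by omega) (by omega)]
    exact congrArg v (Fin.ext (by simp))
  have hmain : 0 < 4 * (v ⬝ᵥ (matA m (pad1 D)).mulVec v) := by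
    rw [hid v]
    by_cases h : j.val + 1 = m
    · have hpm : pad1 v m = v j := by
        rw [pad1_val v m hm le_rfl]
        exact congrArg v (Fin.ext (by simp; omega))
      have hlast : 0 < (pad1 D m + pad1 D (m + 1)) * (pad1 v m) ^ 2 := by
        apply mul_pos hcoef
        rw [hpm]
        exact sq_pos_of_ne' hj
      have hs : 0 ≤ ∑ i ∈ Finset.Icc 1 (m - 1),
          (pad1 D i - pad1 D (i + 2)) * (pad1 v i) ^ 2 :=
        Finset.sum_nonneg hterm_nonneg
      linarith
    · have hmem : j.val + 1 ∈ Finset.Icc 1 (m - 1) := by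
        rw [Finset.mem_Icc]; omega
      have hs : 0 < ∑ i ∈ Finset.Icc 1 (m - 1),
          (pad1 D i - pad1 D (i + 2)) * (pad1 v i) ^ 2 := by
        apply Finset.sum_pos' hterm_nonneg
        refine ⟨j.val + 1, hmem, ?_⟩
        have h1 := hmono (j.val + 1) (by omega) (by omega)
        have h2 : (0:ℝ) < (pad1 v (j.val + 1)) ^ 2 := by
          rw [hvj]; exact sq_pos_of_ne' hj
        nlinarith
      have hlast : 0 ≤ (pad1 D m + pad1 D (m + 1)) * (pad1 v m) ^ 2 :=
        mul_nonneg (le_of_lt hcoef) (sq_nonneg _)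
      linarith
  linarith
end

section
/- Let m ≥ 1, n = m+1, h > 0, and let D ∈ ℝⁿ have entries D_1,…,D_n. Let S(D) ∈ ℝ^{m×m} be the symmetric tridiagonal matrix with S(D)_{ii} = (D_i + 2D_{i+1} + D_{i+2})/(2h) for 1 ≤ i ≤ m−1, S(D)_{mm} = (D_m + D_{m+1})/(2h), S(D)_{i,i+1} = S(D)_{i+1,i} = −(D_{i+1} + D_{i+2})/(2h) for 1 ≤ i ≤ m−1, and all other entries zero. Then for every v ∈ ℝ^m, 2h·vᵀS(D)v = Σ_{i=2}^{m}(D_i + D_{i+1})·(v_i − v_{i−1})² + (D_1 + D_2)·v_1². Consequently, if D_i > 0 for all 1 ≤ i ≤ n, then S(D) is symmetric positive definite: vᵀS(D)v > 0 for every nonzero v ∈ ℝ^m. -/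
open Matrix Finset

/-- The symmetric tridiagonal stiffness matrix `S(D)` (1-based mathematical indexing):
`S_{ii} = (D_i + 2D_{i+1} + D_{i+2})/(2h)` for `i < m`, `S_{mm} = (D_m + D_{m+1})/(2h)`,
`S_{i,i+1} = S_{i+1,i} = −(D_{i+1} + D_{i+2})/(2h)`. -/
noncomputable def matS (m : ℕ) (h : ℝ) (d : ℕ → ℝ) : Matrix (Fin m) (Fin m) ℝ :=
  Matrix.of fun i j =>
    if i = j then
      (if i.val + 1 = m then (d m + d (m + 1)) / (2 * h)
       else (d (i.val + 1) + 2 * d (i.val + 2) + d (i.val + 3)) / (2 * h))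
    else if i.val + 1 = j.val then -((d (i.val + 2) + d (i.val + 3)) / (2 * h))
    else if j.val + 1 = i.val then -((d (j.val + 2) + d (j.val + 3)) / (2 * h))
    else 0


lemma pad1_zero {n : ℕ} (v : Fin n → ℝ) : pad1 v 0 = 0 := by simp [pad1]
lemma pad1_succ {n : ℕ} (v : Fin n → ℝ) {k : ℕ} (hk : k < n) :
    pad1 v (k + 1) = v ⟨k, hk⟩ := by simp [pad1, hk]
lemma pad1_ge {n : ℕ} (v : Fin n → ℝ) {k : ℕ} (hk : n < k) :
    pad1 v k = 0 := by unfold pad1; rw [dif_neg]; omega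

lemma key2 (d w : ℕ → ℝ) (hw : w 0 = 0) (m : ℕ) :
    (∑ a ∈ range m, w (a+1) * ((d (a+1) + d (a+2)) * w (a+1)
        - (d (a+2) + d (a+3)) * w (a+2) - (d (a+1) + d (a+2)) * w a))
      + ∑ a ∈ range m, (d (a+2) + d (a+3)) * w (a+1)^2
    = (∑ a ∈ range m, (d (a+1) + d (a+2)) * (w (a+1) - w a)^2)
      - (d (m+1) + d (m+2)) * w m * w (m+1) + (d (m+1) + d (m+2)) * w m ^ 2 := by
  induction m with
  | zero => simp [hw]
  | succ m ih =>
    rw [Finset.sum_range_succ, Finset.sum_range_succ (f := fun a => (d (a+2) + d (a+3)) * w (a+1)^2),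
      Finset.sum_range_succ (f := fun a => (d (a+1) + d (a+2)) * (w (a+1) - w a)^2)]
    linear_combination ih

section mainlemma
variable {m : ℕ}

lemma row (m : ℕ) {h : ℝ} (hh : h ≠ 0) (d : ℕ → ℝ) (v : Fin m → ℝ) (i : Fin m) :
    2 * h * ∑ j, matS m h d i j * v j =
      ((d (i.val+1) + d (i.val+2))
          + (if i.val + 1 = m then 0 else (d (i.val+2) + d (i.val+3)))) * pad1 v (i.val+1)
        - (d (i.val+2) + d (i.val+3)) * pad1 v (i.val+2)
        - (d (i.val+1) + d (i.val+2)) * pad1 v i.val := by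
  have hsplit : ∀ j : Fin m, 2 * h * (matS m h d i j * v j) =
      (if i = j then
        ((if i.val + 1 = m then (d m + d (m+1)) else (d (i.val+1) + 2*d (i.val+2) + d (i.val+3))) * v j) else 0)
      + (if i.val + 1 = j.val then -((d (i.val+2) + d (i.val+3)) * v j) else 0)
      + (if j.val + 1 = i.val then -((d (j.val+2) + d (j.val+3)) * v j) else 0) := by
    intro j
    unfold matS
    simp only [Matrix.of_apply]
    by_cases h1 : i = j
    · have : ¬ (i.val + 1 = j.val) := by omega
      have h3 : ¬ (j.val + 1 = i.val) := by omega
      rw [if_pos h1, if_pos h1, if_neg this, if_neg h3]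
      by_cases h4 : i.val + 1 = m
      · rw [if_pos h4, if_pos h4]; field_simp; try ring
      · rw [if_neg h4, if_neg h4]; field_simp; try ring
    · have h1' : ¬ (i.val = j.val) := fun hc => h1 (Fin.ext hc)
      rw [if_neg h1, if_neg h1]
      by_cases h2 : i.val + 1 = j.val
      · have h3 : ¬ (j.val + 1 = i.val) := by omega
        rw [if_pos h2, if_pos h2, if_neg h3]
        field_simp; try ring
      · rw [if_neg h2, if_neg h2]
        by_cases h3 : j.val + 1 = i.val
        · rw [if_pos h3, if_pos h3]; field_simp; try ring
        · rw [if_neg h3, if_neg h3]; ring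
  rw [Finset.mul_sum]
  simp_rw [hsplit]
  rw [Finset.sum_add_distrib, Finset.sum_add_distrib]
  have E1 : (∑ j : Fin m, if i = j then
      ((if i.val + 1 = m then (d m + d (m+1)) else (d (i.val+1) + 2*d (i.val+2) + d (i.val+3))) * v j) else 0)
      = ((d (i.val+1) + d (i.val+2))
          + (if i.val + 1 = m then 0 else (d (i.val+2) + d (i.val+3)))) * pad1 v (i.val+1) := by
    rw [Finset.sum_ite_eq, if_pos (Finset.mem_univ i), pad1_succ v i.isLt]
    by_cases h4 : i.val + 1 = m
    · rw [if_pos h4, if_pos h4]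
      have ed1 : d (i.val+1) = d m := by rw [h4]
      have ed2 : d (i.val+2) = d (m+1) := by rw [show i.val+2 = m+1 by omega]
      rw [← ed1, ← ed2, Fin.eta]
      ring
    · rw [if_neg h4, if_neg h4]; ring
  have E2 : (∑ j : Fin m, if i.val + 1 = j.val then -((d (i.val+2) + d (i.val+3)) * v j) else 0)
      = -((d (i.val+2) + d (i.val+3)) * pad1 v (i.val+2)) := by
    by_cases h4 : i.val + 1 < m
    · have hc : ∀ j : Fin m, (i.val + 1 = j.val) ↔ ((⟨i.val+1, h4⟩ : Fin m) = j) := by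
        intro j; rw [Fin.ext_iff]
      simp_rw [hc]
      rw [Finset.sum_ite_eq, if_pos (Finset.mem_univ _), pad1_succ v h4]
    · rw [Finset.sum_eq_zero, pad1_ge v (by omega : m < i.val + 2)]
      · ring
      · intro j _
        rw [if_neg (by omega : ¬ (i.val + 1 = j.val))]
  have E3 : (∑ j : Fin m, if j.val + 1 = i.val then -((d (j.val+2) + d (j.val+3)) * v j) else 0)
      = -((d (i.val+1) + d (i.val+2)) * pad1 v i.val) := by
    by_cases h4 : 0 < i.val
    · have h5 : i.val - 1 < m := by omega
      have hc : ∀ j : Fin m, (j.val + 1 = i.val) ↔ ((⟨i.val - 1, h5⟩ : Fin m) = j) := by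
        intro j; rw [Fin.ext_iff]; simp only []; omega
      simp_rw [hc]
      rw [Finset.sum_ite_eq, if_pos (Finset.mem_univ _)]
      have e1 : (i.val - 1) + 2 = i.val + 1 := by omega
      have e2 : (i.val - 1) + 3 = i.val + 2 := by omega
      have e3 : pad1 v i.val = v ⟨i.val - 1, h5⟩ := by
        have hi : i.val = (i.val - 1) + 1 := by omega
        conv_lhs => rw [hi]
        rw [pad1_succ v h5]
      rw [e1, e2, e3]
    · have h0 : i.val = 0 := by omega
      rw [Finset.sum_eq_zero, h0, pad1_zero]
      · ring
      · intro j _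
        rw [if_neg (by omega : ¬ (j.val + 1 = i.val))]
  rw [E1, E2, E3]
  ring

end mainlemma

theorem stmt_10 (m : ℕ) (hm : 1 ≤ m) (h : ℝ) (hh : 0 < h) (D : Fin (m + 1) → ℝ) :
    (∀ v : Fin m → ℝ,
      2 * h * (v ⬝ᵥ (matS m h (pad1 D)).mulVec v) =
        (∑ i ∈ Finset.Icc 2 m,
            (pad1 D i + pad1 D (i + 1)) * (pad1 v i - pad1 v (i - 1)) ^ 2)
          + (pad1 D 1 + pad1 D 2) * (pad1 v 1) ^ 2) ∧
    ((∀ k : Fin (m + 1), 0 < D k) →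
      ∀ v : Fin m → ℝ, v ≠ 0 → 0 < v ⬝ᵥ (matS m h (pad1 D)).mulVec v) := by
  have hne : h ≠ 0 := ne_of_gt hh
  -- the central identity
  have mainIcc : ∀ v : Fin m → ℝ,
      2 * h * (v ⬝ᵥ (matS m h (pad1 D)).mulVec v) =
        ∑ k ∈ Icc 1 m, (pad1 D k + pad1 D (k+1)) * (pad1 v k - pad1 v (k-1)) ^ 2 := by
    intro v
    have hdot : v ⬝ᵥ (matS m h (pad1 D)).mulVec v
        = ∑ i : Fin m, v i * ∑ j : Fin m, matS m h (pad1 D) i j * v j := rfl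
    set F : ℕ → ℝ := fun a => pad1 v (a+1) *
        (((pad1 D (a+1) + pad1 D (a+2))
            + (if a + 1 = m then 0 else (pad1 D (a+2) + pad1 D (a+3)))) * pad1 v (a+1)
          - (pad1 D (a+2) + pad1 D (a+3)) * pad1 v (a+2)
          - (pad1 D (a+1) + pad1 D (a+2)) * pad1 v a) with hF
    have step1 : ∀ i : Fin m,
        2 * h * (v i * ∑ j : Fin m, matS m h (pad1 D) i j * v j) = F i.val := by
      intro i
      have hv : pad1 v (i.val+1) = v i := by rw [pad1_succ v i.isLt, Fin.eta]
      calc 2 * h * (v i * ∑ j : Fin m, matS m h (pad1 D) i j * v j)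
          = v i * (2 * h * ∑ j : Fin m, matS m h (pad1 D) i j * v j) := by ring
        _ = F i.val := by
            rw [row m hne (pad1 D) v i, hF]
            simp only []
            rw [hv]
    rw [hdot, Finset.mul_sum, Finset.sum_congr rfl (fun i _ => step1 i),
      Fin.sum_univ_eq_sum_range F m]
    -- split off the boundary `if`
    have split : ∑ a ∈ range m, F a =
        (∑ a ∈ range m, pad1 v (a+1) *
            ((pad1 D (a+1) + pad1 D (a+2)) * pad1 v (a+1)
              - (pad1 D (a+2) + pad1 D (a+3)) * pad1 v (a+2)
              - (pad1 D (a+1) + pad1 D (a+2)) * pad1 v a))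
        + ∑ a ∈ range m, (if a + 1 = m then 0 else (pad1 D (a+2) + pad1 D (a+3))) * pad1 v (a+1)^2 := by
      rw [← Finset.sum_add_distrib]
      apply Finset.sum_congr rfl
      intro a _
      rw [hF]
      simp only []
      by_cases hc : a + 1 = m
      · simp only [if_pos hc]; ring
      · simp only [if_neg hc]; ring
    have iftail : ∑ a ∈ range m, (if a + 1 = m then 0 else (pad1 D (a+2) + pad1 D (a+3))) * pad1 v (a+1)^2
        = (∑ a ∈ range m, (pad1 D (a+2) + pad1 D (a+3)) * pad1 v (a+1)^2)
          - (pad1 D (m+1) + pad1 D (m+2)) * pad1 v m ^ 2 := by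
      have e : ∀ a ∈ range m,
          (if a + 1 = m then 0 else (pad1 D (a+2) + pad1 D (a+3))) * pad1 v (a+1)^2
          = (pad1 D (a+2) + pad1 D (a+3)) * pad1 v (a+1)^2
            - (if a = m - 1 then (pad1 D (a+2) + pad1 D (a+3)) * pad1 v (a+1)^2 else 0) := by
        intro a ha
        simp only [Finset.mem_range] at ha
        by_cases hc : a + 1 = m
        · rw [if_pos hc, if_pos (by omega)]; ring
        · rw [if_neg hc, if_neg (by omega)]; ring
      rw [Finset.sum_congr rfl e, Finset.sum_sub_distrib]
      congr 1
      rw [Finset.sum_ite_eq' (range m) (m-1)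
          (fun a => (pad1 D (a+2) + pad1 D (a+3)) * pad1 v (a+1)^2),
        if_pos (by simp only [Finset.mem_range]; omega : m - 1 ∈ range m),
        show m - 1 + 2 = m + 1 by omega, show m - 1 + 3 = m + 2 by omega, show m - 1 + 1 = m by omega]
    have K := key2 (pad1 D) (pad1 v) (pad1_zero v) m
    have hw1 : pad1 v (m+1) = 0 := pad1_ge v (by omega)
    rw [hw1, mul_zero] at K
    have toIcc : ∑ k ∈ Icc 1 m, (pad1 D k + pad1 D (k+1)) * (pad1 v k - pad1 v (k-1)) ^ 2
        = ∑ a ∈ range m, (pad1 D (a+1) + pad1 D (a+2)) * (pad1 v (a+1) - pad1 v a) ^ 2 := by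
      rw [show Icc 1 m = Ico 1 (m+1) from (Finset.Ico_add_one_right_eq_Icc 1 m).symm,
        Finset.sum_Ico_eq_sum_range]
      apply Finset.sum_congr (by norm_num)
      intro a _
      rw [show 1 + a = a + 1 by omega, show a + 1 - 1 = a by omega]
    rw [toIcc, split, iftail]
    linarith [K]
  constructor
  · intro v
    rw [mainIcc v, Finset.Icc_eq_cons_Ioc hm, Finset.sum_cons, ← Finset.Icc_add_one_left_eq_Ioc]
    norm_num [pad1_zero]
    ring
  · intro hD v hv
    have hQ : 0 < 2 * h * (v ⬝ᵥ (matS m h (pad1 D)).mulVec v) := by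
      rw [mainIcc v]
      have hDpos : ∀ k : ℕ, 1 ≤ k → k ≤ m + 1 → 0 < pad1 D k := by
        intro k h1 h2
        obtain ⟨j, rfl⟩ : ∃ j, k = j + 1 := ⟨k - 1, by omega⟩
        rw [pad1_succ D (by omega)]
        exact hD _
      apply Finset.sum_pos'
      · intro k hk
        simp only [Finset.mem_Icc] at hk
        have c1 := hDpos k (by omega) (by omega)
        have c2 := hDpos (k+1) (by omega) (by omega)
        positivity
      · have hex : ∃ a : ℕ, pad1 v (a+1) ≠ 0 := by
          obtain ⟨i, hi⟩ := Function.ne_iff.mp hv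
          exact ⟨i.val, by rw [pad1_succ v i.isLt, Fin.eta]; exact hi⟩
        set k0 := Nat.find hex with hk0def
        have hk0 := Nat.find_spec hex
        have hk0m : k0 < m := by
          by_contra hc
          exact hk0 (pad1_ge v (by omega))
        refine ⟨k0 + 1, ?_, ?_⟩
        · simp only [Finset.mem_Icc]; omega
        · have hwk0 : pad1 v k0 = 0 := by
            rcases Nat.eq_zero_or_pos k0 with h0 | h0
            · rw [h0, pad1_zero]
            · have hmin := Nat.find_min hex (show k0 - 1 < k0 by omega)
              rw [not_not] at hmin
              rwa [show k0 - 1 + 1 = k0 by omega] at hmin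
          rw [show k0 + 1 - 1 = k0 by omega, hwk0, sub_zero]
          have c1 : 0 < pad1 D (k0+1) := by
            rw [pad1_succ D (by omega)]; exact hD _
          have c2 : 0 < pad1 D (k0+1+1) := by
            rw [pad1_succ D (by omega)]; exact hD _
          exact mul_pos (by linarith) (pow_two_pos_of_ne_zero hk0)
    by_contra hq
    push_neg at hq
    nlinarith
end
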